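/- arXiv:2210.01704 — 2 statements merged into one kernel-verified Lean document; each statement's English description precedes it below -/
import Mathlib

section
/- Let d ≥ 1 and let f : [0,1]^d → ℝ be continuous. Then f(x) = ∑_{j ∈ ℕ_{−1}^d} ∑_{k ∈ D_j} d²_{j,k}(f) v_{j,k}(x) for all x ∈ [0,1]^d, and the convergence is uniform: the partial sums over {j ∈ ℕ_{−1}^d : max_i (j_i)_+ ≤ N} converge to f in the sup-norm on [0,1]^d as N → ∞. -/
open MeasureTheory Filter
open scoped ENNReal NNReal

noncomputable section

/-- The univariate hat function `v`. -/
def hatFn (x : ℝ) : ℝ := if 0 ≤ x ∧ x ≤ 1 then 1 - |2 * x - 1| else 0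

/-- Second difference with step `h` in coordinate `i`. -/
def secondDiff {d : ℕ} {K : Type*} [Field K] (i : Fin d) (h : ℝ)
    (f : (Fin d → ℝ) → K) (x : Fin d → ℝ) : K :=
  f (Function.update x i (x i + 2 * h)) - 2 * f (Function.update x i (x i + h)) + f x

/-- Iterated second differences over `e(j) = {i | j i ≠ -1}` with steps `2^{-j i - 1}`. -/
def iterDiff {d : ℕ} {K : Type*} [Field K] (j : Fin d → ℤ)
    (f : (Fin d → ℝ) → K) : (Fin d → ℝ) → K :=
  (Finset.filter (fun i => j i ≠ -1) Finset.univ).toList.foldr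
    (fun i g => secondDiff i ((2:ℝ) ^ (-(j i) - 1)) g) f

/-- The point `x_{j,k}`. -/
def xnode {d : ℕ} (j k : Fin d → ℤ) : Fin d → ℝ :=
  fun i => (2:ℝ) ^ (-(max (j i) 0)) * (k i : ℝ)

/-- Faber–Schauder coefficient `d²_{j,k}(f)`. -/
def faberCoeff {d : ℕ} {K : Type*} [Field K] (j k : Fin d → ℤ)
    (f : (Fin d → ℝ) → K) : K :=
  (-(1:K) / 2) ^ (Finset.filter (fun i => j i ≠ -1) Finset.univ).card *
    iterDiff j f (xnode j k)

/-- Univariate Faber functions on ℝ (translations over ℤ). -/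
def faberR (j k : ℤ) (x : ℝ) : ℝ :=
  if j = -1 then hatFn ((x + 1 + k) / 2) else hatFn ((2:ℝ) ^ j.toNat * x - k)

/-- Tensorized Faber functions on ℝ^d. -/
def faberFnR {d : ℕ} (j k : Fin d → ℤ) (x : Fin d → ℝ) : ℝ :=
  ∏ i, faberR (j i) (k i) (x i)

/-- Univariate Faber functions for the cube `[0,1]`. -/
def faberC (j k : ℤ) (x : ℝ) : ℝ :=
  if j = -1 then (if k = 0 then 1 - x else x) else hatFn ((2:ℝ) ^ j.toNat * x - k)

/-- Tensorized Faber functions for the cube `[0,1]^d`. -/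
def faberFnC {d : ℕ} (j k : Fin d → ℤ) (x : Fin d → ℝ) : ℝ :=
  ∏ i, faberC (j i) (k i) (x i)

/-- Index set `D_j`. -/
def Dj (j : ℤ) : Finset ℤ := if j = -1 then {0, 1} else Finset.Ico 0 (2 ^ j.toNat)

/-- Index set `D_j` in `d` dimensions. -/
def DjSet {d : ℕ} (j : Fin d → ℤ) : Finset (Fin d → ℤ) :=
  Fintype.piFinset fun i => Dj (j i)

/-- Fourier transform on ℝ^d. -/
def ftd {d : ℕ} (f : (Fin d → ℝ) → ℂ) (ξ : Fin d → ℝ) : ℂ :=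
  (((2 * Real.pi) ^ (-(d:ℝ) / 2) : ℝ) : ℂ) *
    ∫ x : Fin d → ℝ, Complex.exp (-Complex.I * ((∑ i, x i * ξ i : ℝ) : ℂ)) * f x

/-- Inverse Fourier transform on ℝ^d. -/
def ftdInv {d : ℕ} (f : (Fin d → ℝ) → ℂ) (ξ : Fin d → ℝ) : ℂ :=
  (((2 * Real.pi) ^ (-(d:ℝ) / 2) : ℝ) : ℂ) *
    ∫ x : Fin d → ℝ, Complex.exp (Complex.I * ((∑ i, x i * ξ i : ℝ) : ℂ)) * f x

/-- Univariate Fourier transform. -/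
def ft1 (f : ℝ → ℂ) (ξ : ℝ) : ℂ :=
  (((2 * Real.pi) ^ (-(1:ℝ) / 2) : ℝ) : ℂ) *
    ∫ x : ℝ, Complex.exp (-Complex.I * ((x * ξ : ℝ) : ℂ)) * f x

/-- A dyadic decomposition of unity on ℝ. -/
structure IsDyadicDecomposition (φ : ℕ → ℝ → ℝ) : Prop where
  smooth : ∀ n, ContDiff ℝ (⊤ : ℕ∞) (φ n)
  compSupp : ∀ n, HasCompactSupport (φ n)
  supp0 : Function.support (φ 0) ⊆ {x : ℝ | |x| ≤ 2}
  suppn : ∀ n : ℕ, 1 ≤ n →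
    Function.support (φ n) ⊆ {x : ℝ | (2:ℝ) ^ (n - 1) ≤ |x| ∧ |x| ≤ (2:ℝ) ^ (n + 1)}
  deriv_bound : ∀ l : ℕ, ∃ c : ℝ, ∀ (n : ℕ) (x : ℝ),
    (2:ℝ) ^ (n * l) * |iteratedDeriv l (φ n) x| ≤ c
  sum_one : ∀ x : ℝ, ∑' n, φ n x = 1

/-- Extension of `φ` by zero to negative integer indices. -/
def phiZ (φ : ℕ → ℝ → ℝ) (n : ℤ) : ℝ → ℝ := if 0 ≤ n then φ n.toNat else 0

/-- The building block `f_ℓ`. -/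
def fblock {d : ℕ} (φ : ℕ → ℝ → ℝ) (f : (Fin d → ℝ) → ℂ) (l : Fin d → ℤ) :
    (Fin d → ℝ) → ℂ :=
  ftdInv fun ξ => (∏ i, ((phiZ φ (l i) (ξ i) : ℝ) : ℂ)) * ftd f ξ

/-- The Besov norm `B_φ^{1/p}`. -/
def BnormE {d : ℕ} (φ : ℕ → ℝ → ℝ) (p : ℝ) (f : (Fin d → ℝ) → ℂ) : ℝ≥0∞ :=
  ∑' j : Fin d → ℕ, ENNReal.ofReal ((2:ℝ) ^ ((∑ i, (j i : ℝ)) / p)) *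
    eLpNorm (fblock φ f fun i => (j i : ℤ)) (ENNReal.ofReal p) volume

/-- The Triebel–Lizorkin norm `T_φ`. -/
def TnormE {d : ℕ} (φ : ℕ → ℝ → ℝ) (f : (Fin d → ℝ) → ℂ) : ℝ≥0∞ :=
  ∫⁻ x, ⨆ j : Fin d → ℕ,
    ENNReal.ofReal ((2:ℝ) ^ (∑ i, j i) * ‖fblock φ f (fun i => (j i : ℤ)) x‖)

/-- The Smolyak truncation `I_n f` of the Faber–Schauder series on the cube. -/
def smolyakC {d : ℕ} (n : ℕ) (f : (Fin d → ℝ) → ℂ) (x : Fin d → ℝ) : ℂ :=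
  ∑ j ∈ (Fintype.piFinset fun _ : Fin d => Finset.Icc (-1:ℤ) (n:ℤ)).filter
      (fun j => (∑ i, max (j i) 0) ≤ (n:ℤ)),
    ∑ k ∈ DjSet j, faberCoeff j k f * (faberFnC j k x : ℂ)

/-- The unit cube `[0,1]^d`. -/
def unitCube (d : ℕ) : Set (Fin d → ℝ) := Set.Icc 0 1

/-- The dyadic box of level `j` and position `k`. -/
def boxSet {d : ℕ} (j : Fin d → ℕ) (k : Fin d → ℤ) : Set (Fin d → ℝ) :=
  Set.univ.pi fun i =>
    Set.Icc ((2:ℝ) ^ (-(j i : ℤ)) * (k i : ℝ)) ((2:ℝ) ^ (-(j i : ℤ)) * ((k i : ℝ) + 1))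

/-- `m`-th forward difference (ℂ-valued). -/
def fdiffC (m : ℕ) (h : ℝ) (f : ℝ → ℂ) (x : ℝ) : ℂ :=
  ∑ i ∈ Finset.range (m + 1), (-1 : ℂ) ^ (m - i) * (m.choose i : ℂ) * f (x + i * h)

/-- `m`-th forward difference (ℝ-valued). -/
def fdiffR (m : ℕ) (h : ℝ) (g : ℝ → ℝ) (x : ℝ) : ℝ :=
  ∑ i ∈ Finset.range (m + 1), (-1 : ℝ) ^ (m - i) * (m.choose i : ℝ) * g (x + i * h)

/-- The hat function at level `j`: `v_{j,0}`. -/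
def hatj (j : ℕ) (x : ℝ) : ℝ := hatFn ((2:ℝ) ^ j * x)

/-- sup of `L_p` norms of `m`-th differences with step `0 < h ≤ 2^{-k}`. -/
def modk (p : ℝ) (m : ℕ) (k : ℕ) (g : ℝ → ℝ) : ℝ≥0∞ :=
  ⨆ h ∈ Set.Ioc (0:ℝ) ((2:ℝ) ^ (-(k:ℤ))),
    eLpNorm (fdiffR m h g) (ENNReal.ofReal p) volume

/-- The Besov quasinorm `N(g)` built from `L_p` moduli of smoothness. -/
def NBesov (p : ℝ) (q : ℝ≥0∞) (m : ℕ) (g : ℝ → ℝ) : ℝ≥0∞ :=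
  eLpNorm g (ENNReal.ofReal p) volume +
    (if q = ⊤ then ⨆ k : ℕ, ENNReal.ofReal ((2:ℝ) ^ ((k:ℝ) / p)) * modk p m k g
     else (∑' k : ℕ,
        (ENNReal.ofReal ((2:ℝ) ^ ((k:ℝ) / p)) * modk p m k g) ^ q.toReal) ^ (1 / q.toReal))

section Aux2



/-- hat basis at level M centered at m/2^M -/
def lam (M : ℕ) (m : ℤ) (x : ℝ) : ℝ := max 0 (1 - |2 ^ M * x - m|)

lemma hatFn_eq (u : ℝ) : hatFn u = max 0 (1 - |2 * u - 1|) := by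
  unfold hatFn
  rcases abs_cases (2 * u - 1) with ⟨h1, h2⟩ | ⟨h1, h2⟩ <;>
    rw [h1] <;> split_ifs with h <;>
    [skip; rw [max_eq_left]; skip; rw [max_eq_left]] <;>
    first
    | (rw [max_eq_right]; linarith)
    | (push_neg at h; rcases le_or_gt 0 u with h' | h' <;> [(have := h h'); skip] <;> linarith)

lemma lam_nonneg (M : ℕ) (m : ℤ) (x : ℝ) : 0 ≤ lam M m x := le_max_left _ _

set_option maxHeartbeats 2000000 in
lemma hat_refine (t : ℝ) :
    max 0 (1 - |t| / 2) =
      max 0 (1 - |t|) + (1 / 2) * max 0 (1 - |t + 1|) + (1 / 2) * max 0 (1 - |t - 1|) := by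
  rcases abs_cases t with ⟨h1, h2⟩ | ⟨h1, h2⟩ <;>
  rcases abs_cases (t + 1) with ⟨g1, g2⟩ | ⟨g1, g2⟩ <;>
  rcases abs_cases (t - 1) with ⟨k1, k2⟩ | ⟨k1, k2⟩ <;>
  rw [h1, g1, k1] <;>
  simp only [max_def] <;> split_ifs <;> linarith

lemma lam_refine (M : ℕ) (m : ℤ) (x : ℝ) :
    lam M m x = lam (M + 1) (2 * m) x + (1 / 2) * lam (M + 1) (2 * m - 1) x
      + (1 / 2) * lam (M + 1) (2 * m + 1) x := by
  have h := hat_refine (2 ^ (M + 1) * x - 2 * m)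
  unfold lam
  have e1 : |(2:ℝ) ^ M * x - m| = |2 ^ (M + 1) * x - 2 * m| / 2 := by
    have : (2:ℝ) ^ (M + 1) * x - 2 * m = 2 * (2 ^ M * x - m) := by ring
    rw [this, abs_mul, abs_two]; ring
  rw [e1, h]
  norm_num [max_def]
  ring_nf

lemma lam_zero_left (M : ℕ) (m : ℤ) (x : ℝ) (hm : m ≤ -1) (hx : 0 ≤ x) : lam M m x = 0 := by
  have hm' : (m:ℝ) ≤ -1 := by exact_mod_cast hm
  have h0 : (0:ℝ) ≤ 2 ^ M * x := by positivity
  have h1 : (1:ℝ) ≤ |2 ^ M * x - m| := by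
    rw [abs_of_nonneg (by linarith)]; linarith
  unfold lam; rw [max_eq_left]; linarith

lemma lam_zero_right (M : ℕ) (m : ℤ) (x : ℝ) (hm : (2:ℤ) ^ M + 1 ≤ m) (hx : x ≤ 1) :
    lam M m x = 0 := by
  have hm' : (2:ℝ) ^ M + 1 ≤ (m:ℝ) := by exact_mod_cast hm
  have h0 : (2:ℝ) ^ M * x ≤ 2 ^ M := by
    nlinarith [pow_pos (show (0:ℝ) < 2 by norm_num) M]
  have h1 : (1:ℝ) ≤ |2 ^ M * x - m| := by
    rw [abs_of_nonpos (by linarith)]; linarith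
  unfold lam; rw [max_eq_left]; linarith

lemma faberC_eq_lam (j : ℤ) (k : ℤ) (hj : 0 ≤ j) (x : ℝ) :
    faberC j k x = lam (j.toNat + 1) (2 * k + 1) x := by
  have hjne : j ≠ -1 := by omega
  unfold faberC lam
  rw [if_neg hjne, hatFn_eq]
  congr 2
  push_cast
  rw [pow_succ]
  ring

lemma faberC_neg_one_zero (x : ℝ) (hx : x ∈ Set.Icc (0:ℝ) 1) :
    faberC (-1) 0 x = lam 0 0 x := by
  unfold faberC lam
  simp only [if_pos rfl]
  rw [max_eq_right]
  · simp [abs_of_nonneg hx.1]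
  · simp [abs_of_nonneg hx.1]; linarith [hx.2]

lemma faberC_neg_one_one (x : ℝ) (hx : x ∈ Set.Icc (0:ℝ) 1) :
    faberC (-1) 1 x = lam 0 1 x := by
  unfold faberC lam
  norm_num
  rw [abs_of_nonpos (by linarith [hx.2]), max_eq_right (by linarith [hx.1])]
  ring



/-- weights of the second difference -/
def uw (e : ℕ) : ℝ := if e = 1 then -2 else 1

/-- per-coordinate weight of a Faber coefficient term -/
def Wt (j : ℤ) (e : ℕ) : ℝ := if j = -1 then (if e = 0 then 1 else 0) else -(1/2) * uw e

/-- per-coordinate node of a Faber coefficient term -/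
def nod (j k : ℤ) (e : ℕ) : ℝ :=
  if j = -1 then (k:ℝ) else (2:ℝ) ^ (-j) * k + e * (2:ℝ) ^ (-j - 1)

/-- 1D Faber coefficient functional -/
def c1 (j k : ℤ) (g : ℝ → ℝ) : ℝ := ∑ e ∈ Finset.range 3, Wt j e * g (nod j k e)

/-- 1D interpolation at level M -/
def interp1 (M : ℕ) (g : ℝ → ℝ) (x : ℝ) : ℝ :=
  ∑ m ∈ Finset.Icc (0:ℤ) (2 ^ M), g (m * (2:ℝ) ^ (-(M:ℤ))) * lam M m x

lemma c1_nat (M : ℕ) (k : ℤ) (g : ℝ → ℝ) :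
    c1 (M:ℤ) k g = -(1/2) * g ((2:ℝ) ^ (-(M:ℤ)) * k)
      + g ((2:ℝ) ^ (-(M:ℤ)) * k + (2:ℝ) ^ (-(M:ℤ) - 1))
      - (1/2) * g ((2:ℝ) ^ (-(M:ℤ)) * k + 2 * (2:ℝ) ^ (-(M:ℤ) - 1)) := by
  have hM : (M:ℤ) ≠ -1 := by omega
  simp only [c1, Finset.sum_range_succ, Finset.sum_range_zero, Wt, uw, nod, if_neg hM]
  norm_num
  ring

lemma c1_neg_one (k : ℤ) (g : ℝ → ℝ) : c1 (-1) k g = g k := by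
  simp only [c1, Finset.sum_range_succ, Finset.sum_range_zero, Wt, nod, if_pos rfl]
  norm_num

lemma two_zpow_succ_node (M : ℕ) (m : ℤ) :
    ((2*m : ℤ):ℝ) * (2:ℝ) ^ (-((M:ℤ)+1)) = (m:ℝ) * (2:ℝ) ^ (-(M:ℤ)) := by
  have : (2:ℝ) ^ (-((M:ℤ)+1)) = (2:ℝ) ^ (-(M:ℤ)) / 2 := by
    rw [neg_add, zpow_add₀ (two_ne_zero)]
    norm_num; ring
  rw [this]; push_cast; ring

lemma step1 (M : ℕ) (g : ℝ → ℝ) (x : ℝ) (hx : x ∈ Set.Icc (0:ℝ) 1) :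
    interp1 M g x + ∑ k ∈ Finset.Ico (0:ℤ) (2 ^ M), c1 (M:ℤ) k g * lam (M+1) (2*k+1) x
      = interp1 (M+1) g x := by
  have h2M : (0:ℤ) < 2 ^ M := by positivity
  have hhalf : (2:ℝ) ^ (-(M:ℤ) - 1) = (2:ℝ) ^ (-(M:ℤ)) / 2 := by
    rw [sub_eq_add_neg, zpow_add₀ (two_ne_zero)]; norm_num; ring
  -- abbreviations
  set t : ℤ → ℝ := fun m => (m:ℝ) * (2:ℝ) ^ (-(M:ℤ)) with ht
  -- Claim 1 : interp1 M g x = A + B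
  have claim1 : interp1 M g x
      = (∑ m ∈ Finset.Icc (0:ℤ) (2 ^ M), g (t m) * lam (M+1) (2*m) x)
      + ∑ k ∈ Finset.Ico (0:ℤ) (2 ^ M),
          ((1/2) * g (t k) + (1/2) * g (t (k+1))) * lam (M+1) (2*k+1) x := by
    unfold interp1
    have hSminus : ∑ m ∈ Finset.Icc (0:ℤ) (2^M), (1/2) * g (t m) * lam (M+1) (2*m-1) x
        = ∑ k ∈ Finset.Ico (0:ℤ) (2^M), (1/2) * g (t (k+1)) * lam (M+1) (2*k+1) x := by
      have hsplit : Finset.Icc (0:ℤ) (2^M) = insert 0 (Finset.Icc 1 (2^M)) := by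
        ext n; simp only [Finset.mem_Icc, Finset.mem_insert]; omega
      rw [hsplit, Finset.sum_insert (by simp)]
      have h0 : lam (M+1) (2*0-1) x = 0 := by
        apply lam_zero_left _ _ _ (by norm_num) hx.1
      rw [h0]
      have himg : Finset.Icc (1:ℤ) (2^M) = (Finset.Ico (0:ℤ) (2^M)).image (· + 1) := by
        ext n; simp only [Finset.mem_Icc, Finset.mem_Ico, Finset.mem_image]
        constructor
        · intro h; exact ⟨n - 1, by omega, by omega⟩
        · rintro ⟨a, ha, rfl⟩; omega
      rw [himg, Finset.sum_image (by intro a _ b _ h; simp only at h; omega)]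
      simp only [mul_zero, zero_add]
      apply Finset.sum_congr rfl
      intro k _
      congr 2
      omega
    have hSplus : ∑ m ∈ Finset.Icc (0:ℤ) (2^M), (1/2) * g (t m) * lam (M+1) (2*m+1) x
        = ∑ k ∈ Finset.Ico (0:ℤ) (2^M), (1/2) * g (t k) * lam (M+1) (2*k+1) x := by
      have hsplit : Finset.Icc (0:ℤ) (2^M) = insert (2^M) (Finset.Ico 0 (2^M)) := by
        ext n; simp only [Finset.mem_Icc, Finset.mem_Ico, Finset.mem_insert]; omega
      rw [hsplit, Finset.sum_insert (by simp)]
      have h0 : lam (M+1) (2*2^M+1) x = 0 := by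
        apply lam_zero_right _ _ _ (by push_cast; omega) hx.2
      rw [h0, mul_zero, zero_add]
    have expand : ∀ m ∈ Finset.Icc (0:ℤ) (2^M),
        g (t m) * (lam (M + 1) (2 * m) x + 1 / 2 * lam (M + 1) (2 * m - 1) x
          + 1 / 2 * lam (M + 1) (2 * m + 1) x)
        = g (t m) * lam (M + 1) (2 * m) x + (1/2) * g (t m) * lam (M + 1) (2 * m - 1) x
          + (1/2) * g (t m) * lam (M + 1) (2 * m + 1) x := fun m _ => by ring
    rw [Finset.sum_congr rfl (fun m _ => by rw [lam_refine M m x]),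
        Finset.sum_congr rfl expand, Finset.sum_add_distrib, Finset.sum_add_distrib,
        hSminus, hSplus, add_assoc, ← Finset.sum_add_distrib]
    congr 1
    apply Finset.sum_congr rfl
    intro k _
    ring
  -- Claim 2 : interp1 (M+1) g x = A + odd part
  have claim2 : interp1 (M+1) g x
      = (∑ m ∈ Finset.Icc (0:ℤ) (2 ^ M), g (t m) * lam (M+1) (2*m) x)
      + ∑ k ∈ Finset.Ico (0:ℤ) (2 ^ M),
          g (((2*k+1 : ℤ):ℝ) * (2:ℝ) ^ (-((M:ℤ)+1))) * lam (M+1) (2*k+1) x := by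
    unfold interp1
    have hsplit : Finset.Icc (0:ℤ) (2 ^ (M+1))
        = (Finset.Icc (0:ℤ) (2^M)).image (fun m => 2*m)
          ∪ (Finset.Ico (0:ℤ) (2^M)).image (fun k => 2*k+1) := by
      ext n
      simp only [Finset.mem_Icc, Finset.mem_Ico, Finset.mem_union, Finset.mem_image]
      constructor
      · intro h
        rcases Int.even_or_odd n with ⟨a, ha⟩ | ⟨a, ha⟩
        · left; exact ⟨a, by constructor <;> [omega; (rw [pow_succ] at h; omega)]⟩
        · right; exact ⟨a, by constructor <;> [(rw [pow_succ] at h; omega); omega]⟩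
      · rintro (⟨a, ha, rfl⟩ | ⟨a, ha, rfl⟩) <;> rw [pow_succ] <;> omega
    rw [hsplit, Finset.sum_union, Finset.sum_image (by intro a _ b _ h; simp only at h; omega),
        Finset.sum_image (by intro a _ b _ h; simp only at h; omega)]
    · congr 1
      · apply Finset.sum_congr rfl
        intro m _
        have ec : ((M+1:ℕ):ℤ) = (M:ℤ)+1 := by push_cast; ring
        rw [ec, two_zpow_succ_node M m]
    · rw [Finset.disjoint_left]
      rintro n hn hn'
      simp only [Finset.mem_image] at hn hn'
      obtain ⟨a, _, rfl⟩ := hn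
      obtain ⟨b, _, hb⟩ := hn'
      omega
  rw [claim1, claim2, add_assoc]
  congr 1
  rw [← Finset.sum_add_distrib]
  apply Finset.sum_congr rfl
  intro k hk
  rw [c1_nat]
  have e1 : (2:ℝ) ^ (-(M:ℤ)) * k + (2:ℝ) ^ (-(M:ℤ) - 1)
      = ((2*k+1 : ℤ):ℝ) * (2:ℝ) ^ (-((M:ℤ)+1)) := by
    have : (2:ℝ) ^ (-((M:ℤ)+1)) = (2:ℝ) ^ (-(M:ℤ)) / 2 := by
      rw [neg_add, zpow_add₀ (two_ne_zero)]; norm_num; ring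
    rw [this, hhalf]; push_cast; ring
  have e2 : (2:ℝ) ^ (-(M:ℤ)) * k + 2 * (2:ℝ) ^ (-(M:ℤ) - 1) = t (k+1) := by
    rw [hhalf, ht]; push_cast; ring
  have e3 : (2:ℝ) ^ (-(M:ℤ)) * (k:ℝ) = t k := by rw [ht]; ring
  rw [e1, e2, e3]
  ring
lemma level_nat (M : ℕ) (g : ℝ → ℝ) (x : ℝ) :
    ∑ k ∈ Dj (M:ℤ), c1 (M:ℤ) k g * faberC (M:ℤ) k x
      = ∑ k ∈ Finset.Ico (0:ℤ) (2 ^ M), c1 (M:ℤ) k g * lam (M+1) (2*k+1) x := by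
  have hM : (M:ℤ) ≠ -1 := by omega
  rw [Dj, if_neg hM, Int.toNat_natCast]
  apply Finset.sum_congr rfl
  intro k _
  rw [faberC_eq_lam _ _ (Int.natCast_nonneg M), Int.toNat_natCast]

lemma base_neg_one (g : ℝ → ℝ) (x : ℝ) (hx : x ∈ Set.Icc (0:ℝ) 1) :
    ∑ k ∈ Dj (-1), c1 (-1) k g * faberC (-1) k x = interp1 0 g x := by
  have hD : Dj (-1:ℤ) = {0, 1} := by rw [Dj, if_pos rfl]
  have hI : Finset.Icc (0:ℤ) (2 ^ (0:ℕ)) = {0, 1} := by decide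
  rw [hD]
  unfold interp1
  rw [hI, Finset.sum_pair (by norm_num), Finset.sum_pair (by norm_num),
      c1_neg_one, c1_neg_one, faberC_neg_one_zero x hx, faberC_neg_one_one x hx]
  norm_num

lemma oneD (N : ℕ) (g : ℝ → ℝ) (x : ℝ) (hx : x ∈ Set.Icc (0:ℝ) 1) :
    ∑ j ∈ Finset.Icc (-1:ℤ) (N:ℤ), ∑ k ∈ Dj j, c1 j k g * faberC j k x
      = interp1 (N+1) g x := by
  induction N with
  | zero =>
    have h01 : Finset.Icc (-1:ℤ) ((0:ℕ):ℤ) = {-1, 0} := by decide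
    rw [h01, Finset.sum_pair (by norm_num), base_neg_one g x hx,
        show ((0:ℤ)) = ((0:ℕ):ℤ) from rfl, level_nat 0 g x]
    exact step1 0 g x hx
  | succ n ih =>
    have hins : Finset.Icc (-1:ℤ) ((n+1:ℕ):ℤ)
        = insert ((n+1:ℕ):ℤ) (Finset.Icc (-1:ℤ) (n:ℤ)) := by
      ext m; simp only [Finset.mem_Icc, Finset.mem_insert]; push_cast; omega
    rw [hins, Finset.sum_insert (by simp only [Finset.mem_Icc]; push_cast; omega),
        ih, level_nat (n+1) g x, add_comm]
    exact step1 (n+1) g x hx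

lemma partition1 (M : ℕ) (x : ℝ) (hx : x ∈ Set.Icc (0:ℝ) 1) :
    ∑ m ∈ Finset.Icc (0:ℤ) (2 ^ M), lam M m x = 1 := by
  induction M with
  | zero =>
    rw [show Finset.Icc (0:ℤ) (2 ^ (0:ℕ)) = {0, 1} from by decide,
        Finset.sum_pair (by norm_num)]
    unfold lam
    rw [pow_zero, one_mul]
    rw [max_eq_right (by rw [Int.cast_zero, sub_zero, abs_of_nonneg hx.1]; linarith [hx.2]),
        max_eq_right (by rw [Int.cast_one, abs_of_nonpos (by linarith [hx.2])]; linarith [hx.1])]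
    rw [Int.cast_zero, Int.cast_one, sub_zero, abs_of_nonneg hx.1,
        abs_of_nonpos (by linarith [hx.2])]
    ring
  | succ n ih =>
    have h := step1 n (fun _ => 1) x hx
    unfold interp1 at h
    simp only [mul_one, one_mul] at h
    have hc : ∀ k, c1 (n:ℤ) k (fun _ => 1) = 0 := by
      intro k; rw [c1_nat]; ring
    simp only [hc, zero_mul, Finset.sum_const_zero, add_zero] at h
    calc ∑ m ∈ Finset.Icc (0:ℤ) (2 ^ (n+1)), lam (n+1) m x
        = ∑ m ∈ Finset.Icc (0:ℤ) (2 ^ n), lam n m x := by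
          have := h
          simpa using this.symm
      _ = 1 := ih
lemma secondDiff_expand {d : ℕ} (a : Fin d) (h : ℝ) (g : (Fin d → ℝ) → ℝ) (x : Fin d → ℝ) :
    secondDiff a h g x
      = ∑ e ∈ Finset.range 3, uw e * g (Function.update x a (x a + e * h)) := by
  rw [secondDiff, Finset.sum_range_succ, Finset.sum_range_succ, Finset.sum_range_succ,
      Finset.sum_range_zero]
  simp only [uw]
  norm_num
  ring

lemma foldNF {d : ℕ} (h : Fin d → ℝ) (f : (Fin d → ℝ) → ℝ) :
    ∀ L : List (Fin d), L.Nodup → ∀ x : Fin d → ℝ,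
    (L.foldr (fun i g => secondDiff i (h i) g) f) x
      = ∑ ε ∈ Fintype.piFinset (fun i => if i ∈ L then Finset.range 3 else {0}),
          (∏ i, uw (ε i)) * f (fun i => x i + ε i * h i) := by
  intro L
  induction L with
  | nil =>
    intro _ x
    rw [show (fun i : Fin d => if i ∈ ([] : List (Fin d)) then Finset.range 3 else {0})
        = fun i : Fin d => ({0} : Finset ℕ) from by funext i; simp,
      Fintype.piFinset_singleton (fun _ : Fin d => (0:ℕ))]
    simp [uw]
  | cons a L' ih =>
    intro hnd x
    rw [List.nodup_cons] at hnd
    obtain ⟨ha, hnd'⟩ := hnd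
    rw [List.foldr_cons, secondDiff_expand]
    have step : ∀ e ∈ Finset.range 3,
        uw e * (L'.foldr (fun i g => secondDiff i (h i) g) f)
            (Function.update x a (x a + e * h a))
        = ∑ ε ∈ Fintype.piFinset (fun i => if i ∈ L' then Finset.range 3 else {0}),
            uw e * ((∏ i, uw (ε i))
              * f (fun i => Function.update x a (x a + e * h a) i + ε i * h i)) := by
      intro e _
      rw [ih hnd', Finset.mul_sum]
    rw [Finset.sum_congr rfl step, ← Finset.sum_product']
    apply Finset.sum_nbij' (i := fun p => Function.update p.2 a p.1)
      (j := fun ε => (ε a, Function.update ε a 0))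
    · rintro ⟨e, ε⟩ hp
      rw [Finset.mem_product] at hp
      rw [Fintype.mem_piFinset]
      intro i
      by_cases hi : i = a
      · subst hi
        simp only [Function.update_self, List.mem_cons, true_or, if_pos (Or.inl rfl)]
        exact hp.1
      · rw [Function.update_of_ne hi]
        have := Fintype.mem_piFinset.1 hp.2 i
        by_cases hiL : i ∈ L'
        · simpa [hiL, hi] using this
        · simpa [hiL, hi] using this
    · intro ε hε
      rw [Fintype.mem_piFinset] at hε
      rw [Finset.mem_product]
      constructor
      · have := hε a
        simpa using this
      · rw [Fintype.mem_piFinset]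
        intro i
        simp only [Prod.snd]
        by_cases hi : i = a
        · subst hi
          simp [Function.update_self, ha]
        · rw [Function.update_of_ne hi]
          have := hε i
          by_cases hiL : i ∈ L'
          · simpa [hiL, hi] using this
          · simpa [hiL, hi] using this
    · rintro ⟨e, ε⟩ hp
      rw [Finset.mem_product] at hp
      have hεa : ε a = 0 := by
        have := Fintype.mem_piFinset.1 hp.2 a
        simpa [ha] using this
      have h2 : Function.update (Function.update ε a e) a 0 = ε := by
        funext i
        by_cases hi : i = a
        · subst hi; rw [Function.update_self, hεa]
        · rw [Function.update_of_ne hi, Function.update_of_ne hi]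
      simp [h2]
    · intro ε hε
      simp only [Prod.fst, Prod.snd]
      funext i
      by_cases hi : i = a
      · subst hi; rw [Function.update_self]
      · rw [Function.update_of_ne hi, Function.update_of_ne hi]
    · rintro ⟨e, ε⟩ hp
      rw [Finset.mem_product] at hp
      have hεa : ε a = 0 := by
        have := Fintype.mem_piFinset.1 hp.2 a
        simpa [ha] using this
      have hprod : ∏ i, uw (Function.update ε a e i) = uw e * ∏ i, uw (ε i) := by
        rw [← Finset.mul_prod_erase Finset.univ _ (Finset.mem_univ a),
            ← Finset.mul_prod_erase Finset.univ (fun i => uw (ε i)) (Finset.mem_univ a),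
            Function.update_self, hεa]
        rw [show uw 0 = 1 from rfl]
        rw [Finset.prod_congr rfl (fun i hi =>
          by rw [Function.update_of_ne (Finset.ne_of_mem_erase hi)])]
        ring
      have hpoint : (fun i => Function.update x a (x a + e * h a) i + ε i * h i)
          = fun i => x i + (Function.update ε a e i : ℕ) * h i := by
        funext i
        by_cases hi : i = a
        · subst hi
          rw [Function.update_self, Function.update_self, hεa]
          push_cast; ring
        · rw [Function.update_of_ne hi, Function.update_of_ne hi]
      rw [hpoint, hprod]
      ring
lemma faberCoeff_NF {d : ℕ} (j k : Fin d → ℤ) (hj : ∀ i, -1 ≤ j i)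
    (f : (Fin d → ℝ) → ℝ) :
    faberCoeff j k f
      = ∑ ε ∈ Fintype.piFinset (fun i => if j i ≠ -1 then Finset.range 3 else {0}),
          (∏ i, Wt (j i) (ε i)) * f (fun i => nod (j i) (k i) (ε i)) := by
  classical
  set L := (Finset.filter (fun i => j i ≠ -1) Finset.univ).toList with hLdef
  have hmem : ∀ i, i ∈ L ↔ j i ≠ -1 := by
    intro i
    rw [hLdef, Finset.mem_toList, Finset.mem_filter]
    simp
  have hset : (Fintype.piFinset fun i => if i ∈ L then Finset.range 3 else {0})
      = Fintype.piFinset (fun i => if j i ≠ -1 then Finset.range 3 else {0}) := by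
    ext ε
    simp only [Fintype.mem_piFinset]
    apply forall_congr'
    intro i
    rw [if_congr (hmem i) rfl rfl]
  rw [faberCoeff, iterDiff,
    foldNF (fun i => (2:ℝ) ^ (-(j i) - 1)) f L (Finset.nodup_toList _) (xnode j k), hset,
    Finset.mul_sum]
  apply Finset.sum_congr rfl
  intro ε hε
  rw [Fintype.mem_piFinset] at hε
  have hε0 : ∀ i, j i = -1 → ε i = 0 := by
    intro i hi
    have := hε i
    rw [if_neg (by simp [hi])] at this
    simpa using this
  have hw : (∏ i, Wt (j i) (ε i))
      = (-(1:ℝ)/2) ^ (Finset.filter (fun i => j i ≠ -1) Finset.univ).card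
        * ∏ i, uw (ε i) := by
    have hterm : ∀ i : Fin d,
        Wt (j i) (ε i) = (if j i ≠ -1 then (-(1:ℝ)/2) else 1) * uw (ε i) := by
      intro i
      by_cases hi : j i = -1
      · rw [hε0 i hi]
        simp [Wt, uw, hi]
      · rw [Wt, if_neg hi, if_pos (show ¬ j i = -1 from hi)]
        ring
    rw [Finset.prod_congr rfl (fun i _ => hterm i), Finset.prod_mul_distrib,
      Finset.prod_ite, Finset.prod_const, Finset.prod_const, one_pow, mul_one]
  rw [hw]
  have hpt : (fun i => xnode j k i + (ε i : ℝ) * (2:ℝ) ^ (-(j i) - 1))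
      = fun i => nod (j i) (k i) (ε i) := by
    funext i
    by_cases hi : j i = -1
    · rw [nod, if_pos hi, hε0 i hi, xnode, hi]
      norm_num
    · have hj0 : 0 ≤ j i := by have := hj i; omega
      rw [nod, if_neg hi, xnode, max_eq_left hj0]
  rw [hpt]
  ring
lemma sum_piFinset_cons {n : ℕ} {γ : Type*} [DecidableEq γ] (S : Finset γ)
    (F : (Fin (n+1) → γ) → ℝ) :
    ∑ α ∈ Fintype.piFinset (fun _ : Fin (n+1) => S), F α
      = ∑ x ∈ S, ∑ α ∈ Fintype.piFinset (fun _ : Fin n => S), F (Fin.cons x α) := by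
  rw [← Finset.sum_product']
  symm
  refine Finset.sum_nbij' (fun p => Fin.cons p.1 p.2) (fun β => (β 0, Fin.tail β)) ?_ ?_ ?_ ?_ ?_
  · rintro ⟨x, α⟩ hp
    rw [Finset.mem_product] at hp
    rw [Fintype.mem_piFinset]
    intro i
    refine Fin.cases ?_ ?_ i
    · simpa using hp.1
    · intro i'
      simpa using Fintype.mem_piFinset.1 hp.2 i'
  · intro β hβ
    rw [Fintype.mem_piFinset] at hβ
    rw [Finset.mem_product]
    exact ⟨hβ 0, Fintype.mem_piFinset.2 fun i => hβ i.succ⟩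
  · rintro ⟨x, α⟩ _
    simp [Fin.tail_cons]
  · intro β _
    simp [Fin.cons_self_tail]
  · rintro ⟨x, α⟩ _
    rfl

lemma tensor : ∀ (d : ℕ) {ι κ : Type*} [DecidableEq ι] [DecidableEq κ]
    (A : Finset ι) (B : Finset κ) (a : Fin d → ι → ℝ) (b : Fin d → κ → ℝ)
    (s : ι → ℝ) (t : κ → ℝ)
    (_ : ∀ i (g : ℝ → ℝ), ∑ α ∈ A, a i α * g (s α) = ∑ β ∈ B, b i β * g (t β))
    (f : (Fin d → ℝ) → ℝ),
    ∑ α ∈ Fintype.piFinset (fun _ : Fin d => A), (∏ i, a i (α i)) * f (fun i => s (α i))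
      = ∑ β ∈ Fintype.piFinset (fun _ : Fin d => B), (∏ i, b i (β i)) * f (fun i => t (β i)) := by
  intro d
  induction d with
  | zero =>
    intro ι κ _ _ A B a b s t hyp f
    rw [Fintype.piFinset_of_isEmpty, Fintype.piFinset_of_isEmpty, Fintype.sum_unique,
      Fintype.sum_unique]
    simp only [Finset.univ_eq_empty, Finset.prod_empty, one_mul]
    congr 1
    exact funext fun i => isEmptyElim i
  | succ n ih =>
    intro ι κ _ _ A B a b s t hyp f
    rw [sum_piFinset_cons, sum_piFinset_cons]
    have lhs_eq : ∀ x ∈ A,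
        (∑ α ∈ Fintype.piFinset (fun _ : Fin n => A),
          (∏ i : Fin (n+1), a i ((Fin.cons x α : Fin (n+1) → ι) i)) * f (fun i => s ((Fin.cons x α : Fin (n+1) → ι) i)))
        = a 0 x * ∑ α ∈ Fintype.piFinset (fun _ : Fin n => A),
            (∏ i : Fin n, a i.succ (α i)) * f (Fin.cons (s x) (fun i => s (α i))) := by
      intro x _
      rw [Finset.mul_sum]
      apply Finset.sum_congr rfl
      intro α _
      rw [Fin.prod_univ_succ]
      simp only [Fin.cons_zero, Fin.cons_succ]
      have harg : (fun i => s ((Fin.cons x α : Fin (n+1) → ι) i)) = Fin.cons (s x) (fun i => s (α i)) := by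
        funext i
        refine Fin.cases ?_ ?_ i <;> simp
      rw [harg]
      ring
    have rhs_eq : ∀ y ∈ B,
        (∑ β ∈ Fintype.piFinset (fun _ : Fin n => B),
          (∏ i : Fin (n+1), b i ((Fin.cons y β : Fin (n+1) → κ) i)) * f (fun i => t ((Fin.cons y β : Fin (n+1) → κ) i)))
        = b 0 y * ∑ β ∈ Fintype.piFinset (fun _ : Fin n => B),
            (∏ i : Fin n, b i.succ (β i)) * f (Fin.cons (t y) (fun i => t (β i))) := by
      intro y _
      rw [Finset.mul_sum]
      apply Finset.sum_congr rfl
      intro β _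
      rw [Fin.prod_univ_succ]
      simp only [Fin.cons_zero, Fin.cons_succ]
      have harg : (fun i => t ((Fin.cons y β : Fin (n+1) → κ) i)) = Fin.cons (t y) (fun i => t (β i)) := by
        funext i
        refine Fin.cases ?_ ?_ i <;> simp
      rw [harg]
      ring
    rw [Finset.sum_congr rfl lhs_eq, Finset.sum_congr rfl rhs_eq]
    have key : ∀ u : ℝ,
        (∑ α ∈ Fintype.piFinset (fun _ : Fin n => A),
          (∏ i : Fin n, a i.succ (α i)) * f (Fin.cons u (fun i => s (α i))))
        = ∑ β ∈ Fintype.piFinset (fun _ : Fin n => B),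
            (∏ i : Fin n, b i.succ (β i)) * f (Fin.cons u (fun i => t (β i))) := by
      intro u
      exact ih A B (fun i => a i.succ) (fun i => b i.succ) s t
        (fun i g => hyp i.succ g) (fun z => f (Fin.cons u z))
    rw [Finset.sum_congr rfl (fun x _ => by rw [key (s x)])]
    exact hyp 0 (fun u => ∑ β ∈ Fintype.piFinset (fun _ : Fin n => B),
      (∏ i : Fin n, b i.succ (β i)) * f (Fin.cons u (fun i => t (β i))))
lemma Dj_subset (N : ℕ) (j : ℤ) (hj : -1 ≤ j) (hjN : j ≤ N) :
    Dj j ⊆ Finset.Icc (0:ℤ) (2 ^ N) := by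
  intro k hk
  rw [Finset.mem_Icc]
  by_cases h : j = -1
  · rw [Dj, if_pos h] at hk
    have h1 : (1:ℤ) ≤ 2 ^ N := one_le_pow₀ (by norm_num)
    simp only [Finset.mem_insert, Finset.mem_singleton] at hk
    rcases hk with rfl | rfl <;> omega
  · rw [Dj, if_neg h, Finset.mem_Ico] at hk
    have h1 : (2:ℤ) ^ j.toNat ≤ 2 ^ N := by
      apply pow_le_pow_right₀ (by norm_num)
      omega
    omega

lemma sum_piFinset_prod2 {d : ℕ} {α β : Type*} [DecidableEq α] [DecidableEq β]
    (J : Finset α) (K : Finset β) (F : (Fin d → α × β) → ℝ) :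
    ∑ σ ∈ Fintype.piFinset (fun _ : Fin d => J ×ˢ K), F σ
      = ∑ j ∈ Fintype.piFinset (fun _ : Fin d => J),
        ∑ k ∈ Fintype.piFinset (fun _ : Fin d => K), F (fun i => (j i, k i)) := by
  rw [← Finset.sum_product']
  refine Finset.sum_nbij' (fun σ => (fun i => (σ i).1, fun i => (σ i).2))
    (fun p => fun i => (p.1 i, p.2 i)) ?_ ?_ ?_ ?_ ?_
  · intro σ hσ
    rw [Fintype.mem_piFinset] at hσ
    rw [Finset.mem_product]
    refine ⟨?_, ?_⟩ <;> rw [Fintype.mem_piFinset] <;> intro i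
    · exact (Finset.mem_product.1 (hσ i)).1
    · exact (Finset.mem_product.1 (hσ i)).2
  · rintro ⟨j, k⟩ hp
    rw [Finset.mem_product] at hp
    rw [Fintype.mem_piFinset]
    intro i
    rw [Finset.mem_product]
    exact ⟨Fintype.mem_piFinset.1 hp.1 i, Fintype.mem_piFinset.1 hp.2 i⟩
  · intro σ _
    funext i
    rfl
  · rintro ⟨j, k⟩ _
    rfl
  · intro σ _
    congr 1
lemma hyp1 (N : ℕ) (y : ℝ) (hy : y ∈ Set.Icc (0:ℝ) 1) (g : ℝ → ℝ) :
    ∑ σ ∈ (Finset.Icc (-1:ℤ) (N:ℤ)) ×ˢ ((Finset.Icc (0:ℤ) (2^N)) ×ˢ (Finset.range 3)),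
      (if σ.2.1 ∈ Dj σ.1 then Wt σ.1 σ.2.2 * faberC σ.1 σ.2.1 y else 0)
        * g (nod σ.1 σ.2.1 σ.2.2)
    = ∑ m ∈ Finset.Icc (0:ℤ) (2^(N+1)),
        lam (N+1) m y * g ((m:ℝ) * (2:ℝ) ^ (-((N+1:ℕ):ℤ))) := by
  rw [Finset.sum_product]
  have hj_eq : ∀ jj ∈ Finset.Icc (-1:ℤ) (N:ℤ),
      (∑ p ∈ (Finset.Icc (0:ℤ) (2^N)) ×ˢ (Finset.range 3),
        (if ((jj, p) : ℤ × ℤ × ℕ).2.1 ∈ Dj (jj, p).1 then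
            Wt (jj, p).1 (jj, p).2.2 * faberC (jj, p).1 (jj, p).2.1 y else 0)
          * g (nod (jj, p).1 (jj, p).2.1 (jj, p).2.2))
      = ∑ k ∈ Dj jj, c1 jj k g * faberC jj k y := by
    intro jj hjj
    rw [Finset.mem_Icc] at hjj
    rw [Finset.sum_product]
    dsimp only
    have hvan : ∀ k ∈ Finset.Icc (0:ℤ) (2^N), k ∉ Dj jj →
        (∑ e ∈ Finset.range 3,
          (if k ∈ Dj jj then Wt jj e * faberC jj k y else 0) * g (nod jj k e)) = 0 := by
      intro k _ hk
      apply Finset.sum_eq_zero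
      intro e _
      rw [if_neg hk, zero_mul]
    rw [← Finset.sum_subset (Dj_subset N jj hjj.1 hjj.2) hvan]
    apply Finset.sum_congr rfl
    intro k hk
    rw [c1, Finset.sum_mul]
    apply Finset.sum_congr rfl
    intro e _
    rw [if_pos hk]
    ring
  rw [Finset.sum_congr rfl hj_eq, oneD N g y hy]
  unfold interp1
  apply Finset.sum_congr rfl
  intro m _
  ring

lemma bridge {d : ℕ} (N : ℕ) (f : (Fin d → ℝ) → ℝ) (x : Fin d → ℝ) :
    ∑ j ∈ Fintype.piFinset (fun _ : Fin d => Finset.Icc (-1:ℤ) (N:ℤ)),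
      ∑ k ∈ DjSet j, faberCoeff j k f * faberFnC j k x
    = ∑ σ ∈ Fintype.piFinset (fun _ : Fin d =>
        (Finset.Icc (-1:ℤ) (N:ℤ)) ×ˢ ((Finset.Icc (0:ℤ) (2^N)) ×ˢ (Finset.range 3))),
      (∏ i, (if (σ i).2.1 ∈ Dj (σ i).1 then
          Wt (σ i).1 (σ i).2.2 * faberC (σ i).1 (σ i).2.1 (x i) else 0))
        * f (fun i => nod (σ i).1 (σ i).2.1 (σ i).2.2) := by
  rw [sum_piFinset_prod2]
  apply Finset.sum_congr rfl
  intro j hj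
  rw [sum_piFinset_prod2]
  dsimp only
  have hjmem : ∀ i, -1 ≤ j i ∧ j i ≤ (N:ℤ) :=
    fun i => Finset.mem_Icc.1 (Fintype.mem_piFinset.1 hj i)
  symm
  have hsub : DjSet j ⊆ Fintype.piFinset (fun _ : Fin d => Finset.Icc (0:ℤ) (2^N)) :=
    Fintype.piFinset_subset _ _ (fun i => Dj_subset N (j i) (hjmem i).1 (hjmem i).2)
  have hvan : ∀ k ∈ Fintype.piFinset (fun _ : Fin d => Finset.Icc (0:ℤ) (2^N)),
      k ∉ DjSet j →
      (∑ e ∈ Fintype.piFinset (fun _ : Fin d => Finset.range 3),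
        (∏ i, (if k i ∈ Dj (j i) then Wt (j i) (e i) * faberC (j i) (k i) (x i) else 0))
          * f (fun i => nod (j i) (k i) (e i))) = 0 := by
    intro k _ hk
    have : ∃ i0, k i0 ∉ Dj (j i0) := by
      by_contra hcon
      push_neg at hcon
      exact hk (Fintype.mem_piFinset.2 hcon)
    obtain ⟨i0, hi0⟩ := this
    apply Finset.sum_eq_zero
    intro e _
    have hz : (∏ i, (if k i ∈ Dj (j i) then Wt (j i) (e i) * faberC (j i) (k i) (x i) else 0))
        = 0 := Finset.prod_eq_zero (Finset.mem_univ i0) (by rw [if_neg hi0])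
    rw [hz, zero_mul]
  rw [← Finset.sum_subset hsub hvan]
  apply Finset.sum_congr rfl
  intro k hk
  have hkmem : ∀ i, k i ∈ Dj (j i) := Fintype.mem_piFinset.1 hk
  have hprod : ∀ e : Fin d → ℕ,
      (∏ i, (if k i ∈ Dj (j i) then Wt (j i) (e i) * faberC (j i) (k i) (x i) else 0))
      = (∏ i, Wt (j i) (e i)) * faberFnC j k x := by
    intro e
    rw [Finset.prod_congr rfl (fun i _ => if_pos (hkmem i)), Finset.prod_mul_distrib]
    rfl
  have hcoeff : faberCoeff j k f
      = ∑ e ∈ Fintype.piFinset (fun _ : Fin d => Finset.range 3),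
          (∏ i, Wt (j i) (e i)) * f (fun i => nod (j i) (k i) (e i)) := by
    rw [faberCoeff_NF j k (fun i => (hjmem i).1) f]
    apply Finset.sum_subset
    · apply Fintype.piFinset_subset
      intro i
      by_cases hji : j i ≠ -1
      · rw [if_pos hji]
      · rw [if_neg hji]
        intro e he
        simp only [Finset.mem_singleton] at he
        simp [he]
    · intro e he hne
      have : ∃ i0, ¬ (e i0 ∈ if j i0 ≠ -1 then Finset.range 3 else {0}) := by
        by_contra hcon
        push_neg at hcon
        exact hne (Fintype.mem_piFinset.2 hcon)
      obtain ⟨i0, hi0⟩ := this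
      have hj0 : j i0 = -1 := by
        by_contra hji
        rw [if_pos hji] at hi0
        exact hi0 (Fintype.mem_piFinset.1 he i0)
      rw [if_neg (by simp [hj0])] at hi0
      have he0 : e i0 ≠ 0 := by simpa using hi0
      have hW : Wt (j i0) (e i0) = 0 := by
        rw [Wt, if_pos hj0, if_neg he0]
      have hz : (∏ i, Wt (j i) (e i)) = 0 :=
        Finset.prod_eq_zero (Finset.mem_univ i0) hW
      rw [hz, zero_mul]
  rw [hcoeff, Finset.sum_mul]
  apply Finset.sum_congr rfl
  intro e _
  rw [hprod e]
  ring

end Aux2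
set_option maxHeartbeats 1600000 in
/-- uniform convergence of the Faber–Schauder series of a continuous
function on the unit cube, with partial sums over levels `max_i (j_i)_+ ≤ N`. -/
theorem statement0 (d : ℕ) (hd : 1 ≤ d) (f : (Fin d → ℝ) → ℝ)
    (hf : ContinuousOn f (unitCube d)) :
    TendstoUniformlyOn
      (fun (N : ℕ) (x : Fin d → ℝ) =>
        ∑ j ∈ (Fintype.piFinset fun _ : Fin d => Finset.Icc (-1 : ℤ) (N : ℤ)),
          ∑ k ∈ DjSet j, faberCoeff j k f * faberFnC j k x)
      f atTop (unitCube d) := by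
  have hcomp : IsCompact (unitCube d) := isCompact_Icc
  have hUC : UniformContinuousOn f (unitCube d) :=
    hcomp.uniformContinuousOn_of_continuous hf
  rw [Metric.tendstoUniformlyOn_iff]
  intro ε hε
  obtain ⟨δ, hδ, hδ'⟩ := Metric.uniformContinuousOn_iff.1 hUC (ε/2) (by linarith)
  obtain ⟨n₀, hn₀⟩ := exists_pow_lt_of_lt_one hδ (show (1:ℝ)/2 < 1 by norm_num)
  filter_upwards [Filter.eventually_ge_atTop n₀] with N hN
  intro x hx
  have hxi : ∀ i, x i ∈ Set.Icc (0:ℝ) 1 := fun i => ⟨hx.1 i, hx.2 i⟩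
  set M := N + 1 with hM
  set S := Fintype.piFinset (fun _ : Fin d => Finset.Icc (0:ℤ) (2^M)) with hS
  set w : (Fin d → ℤ) → ℝ := fun m => ∏ i, lam M (m i) (x i) with hw
  set p : (Fin d → ℤ) → (Fin d → ℝ) := fun m => fun i => (m i : ℝ) * (2:ℝ) ^ (-(M:ℤ)) with hp
  have hrepr : (∑ j ∈ Fintype.piFinset fun _ : Fin d => Finset.Icc (-1 : ℤ) (N : ℤ),
      ∑ k ∈ DjSet j, faberCoeff j k f * faberFnC j k x)
      = ∑ m ∈ S, w m * f (p m) := by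
    rw [bridge N f x]
    exact tensor d _ _
      (fun (i : Fin d) (σ : ℤ × ℤ × ℕ) => if σ.2.1 ∈ Dj σ.1 then Wt σ.1 σ.2.2 * faberC σ.1 σ.2.1 (x i) else 0)
      (fun (i : Fin d) (m : ℤ) => lam M m (x i)) (fun σ : ℤ × ℤ × ℕ => nod σ.1 σ.2.1 σ.2.2)
      (fun m : ℤ => (m:ℝ) * (2:ℝ) ^ (-(M:ℤ))) (fun i g => hyp1 N (x i) (hxi i) g) f
  have hpart : (∑ m ∈ S, w m) = 1 := by
    have h1 : (∑ m ∈ Fintype.piFinset (fun _ : Fin d => Finset.Icc (0:ℤ) (2^M)),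
        ∏ i, lam M (m i) (x i)) = 1 := by
      have h2 := Finset.prod_univ_sum (fun _ : Fin d => Finset.Icc (0:ℤ) (2^M))
        (fun i v => lam M v (x i))
      rw [← h2, Finset.prod_congr rfl (fun i _ => partition1 M (x i) (hxi i))]
      exact Finset.prod_const_one
    exact h1
  have hwnn : ∀ m, 0 ≤ w m := fun m => Finset.prod_nonneg fun i _ => lam_nonneg _ _ _
  have hsmall : (2:ℝ) ^ (-(M:ℤ)) < δ := by
    have h1 : (2:ℝ) ^ (-(M:ℤ)) = ((1:ℝ)/2) ^ M := by
      rw [zpow_neg, zpow_natCast, one_div, inv_pow]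
    rw [h1]
    calc ((1:ℝ)/2) ^ M ≤ ((1:ℝ)/2) ^ n₀ := by
          apply pow_le_pow_of_le_one (by norm_num) (by norm_num)
          omega
      _ < δ := hn₀
  have hterm : ∀ m ∈ S, |w m * (f x - f (p m))| ≤ w m * (ε/2) := by
    intro m hm
    rcases eq_or_lt_of_le (hwnn m) with heq | hpos
    · rw [← heq]
      simp
    · have hlampos : ∀ i, 0 < lam M (m i) (x i) := by
        intro i
        rcases (lam_nonneg M (m i) (x i)).lt_or_eq with h | h
        · exact h
        · exfalso
          have : w m = 0 := Finset.prod_eq_zero (Finset.mem_univ i) h.symm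
          rw [this] at hpos
          exact lt_irrefl _ hpos
      have hmmem : ∀ i, m i ∈ Finset.Icc (0:ℤ) (2^M) := Fintype.mem_piFinset.1 hm
      have hpcube : p m ∈ unitCube d := by
        constructor <;> intro i
        · have h0 : (0:ℝ) ≤ (m i : ℝ) := by
            have := (Finset.mem_Icc.1 (hmmem i)).1
            exact_mod_cast this
          positivity
        · have h1 : (m i : ℝ) ≤ 2 ^ M := by
            have := (Finset.mem_Icc.1 (hmmem i)).2
            exact_mod_cast this
          have h2 : (0:ℝ) < (2:ℝ) ^ (-(M:ℤ)) := by positivity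
          have h3 : (2:ℝ) ^ (M:ℕ) * (2:ℝ) ^ (-(M:ℤ)) = 1 := by
            rw [← zpow_natCast (2:ℝ) M, ← zpow_add₀ (two_ne_zero)]
            simp
          calc (m i : ℝ) * (2:ℝ) ^ (-(M:ℤ)) ≤ (2:ℝ) ^ (M:ℕ) * (2:ℝ) ^ (-(M:ℤ)) := by
                apply mul_le_mul_of_nonneg_right h1 (le_of_lt h2)
            _ = 1 := h3
      have hdist : dist x (p m) < δ := by
        rw [dist_pi_lt_iff hδ]
        intro i
        rw [Real.dist_eq]
        have hli := hlampos i
        rw [lam] at hli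
        have habs : |2 ^ M * x i - (m i : ℝ)| < 1 := by
          by_contra hcon
          push_neg at hcon
          rw [max_eq_left (by linarith)] at hli
          exact lt_irrefl _ hli
        have hfact : x i - p m i = (2 ^ M * x i - (m i:ℝ)) * (2:ℝ) ^ (-(M:ℤ)) := by
          rw [hp]
          have h3 : (2:ℝ) ^ (M:ℕ) * (2:ℝ) ^ (-(M:ℤ)) = 1 := by
            rw [← zpow_natCast (2:ℝ) M, ← zpow_add₀ (two_ne_zero)]
            simp
          field_simp
          linear_combination (-x i) * h3
        rw [hfact, abs_mul, abs_of_nonneg (le_of_lt (show (0:ℝ) < (2:ℝ)^(-(M:ℤ)) by positivity))]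
        calc |2 ^ M * x i - (m i:ℝ)| * (2:ℝ) ^ (-(M:ℤ))
            ≤ 1 * (2:ℝ) ^ (-(M:ℤ)) := by
              apply mul_le_mul_of_nonneg_right (le_of_lt habs) (by positivity)
          _ = (2:ℝ) ^ (-(M:ℤ)) := one_mul _
          _ < δ := hsmall
      have hfd : |f x - f (p m)| < ε/2 := by
        rw [← Real.dist_eq]
        exact hδ' x hx (p m) hpcube hdist
      rw [abs_mul, abs_of_nonneg (hwnn m)]
      exact mul_le_mul_of_nonneg_left (le_of_lt hfd) (hwnn m)
  rw [hrepr, Real.dist_eq]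
  have hdiff : f x - (∑ m ∈ S, w m * f (p m)) = ∑ m ∈ S, w m * (f x - f (p m)) := by
    rw [Finset.sum_congr rfl (fun m _ => mul_sub (w m) (f x) (f (p m))),
      Finset.sum_sub_distrib, ← Finset.sum_mul, hpart, one_mul]
  rw [hdiff]
  calc |∑ m ∈ S, w m * (f x - f (p m))| ≤ ∑ m ∈ S, |w m * (f x - f (p m))| :=
        Finset.abs_sum_le_sum_abs _ _
    _ ≤ ∑ m ∈ S, w m * (ε/2) := Finset.sum_le_sum hterm
    _ = ε/2 := by rw [← Finset.sum_mul, hpart, one_mul]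
    _ < ε := by linarith
end
end

section
/- (Non-compactness of the limiting embedding into L_∞) Let 0 < p < ∞, 0 < q ≤ ∞, and let m ∈ ℕ with m > 1/p. For a continuous function g : ℝ → ℝ define the Besov quasinorm N(g) := ‖g‖_{L_p(ℝ)} + ( ∑_{k=0}^∞ [ 2^{k/p} · sup_{0 < h ≤ 2^{−k}} ‖Δ^m_h g‖_{L_p(ℝ)} ]^q )^{1/q} (with the supremum over k in place of the q-sum when q = ∞). Then there exists a constant C > 0 (depending only on p, q, m) such that the hat functions v_{j,0}, j ∈ ℕ₀, satisfy N(v_{j,0}) ≤ C for all j ∈ ℕ₀, while ‖v_{j,0} − v_{ℓ,0}‖_{sup} ≥ 1 whenever j ≠ ℓ. In particular, the set {g : ℝ → ℝ continuous, supported in [0,1], N(g) ≤ C} is not totally bounded in the sup-norm. -/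
open MeasureTheory Filter
open scoped ENNReal NNReal

noncomputable section

section Aux
open Finset

-- from a.lean
lemma hatFn_eq_max (x : ℝ) : hatFn x = max (1 - |2 * x - 1|) 0 := by
  unfold hatFn
  split_ifs with h
  · rw [max_eq_left]
    have : |2 * x - 1| ≤ 1 := abs_le.mpr ⟨by linarith [h.1], by linarith [h.2]⟩
    linarith
  · rw [max_eq_right]
    push_neg at h
    rcases lt_or_ge x 0 with hx | hx
    · have : |2 * x - 1| = -(2 * x - 1) := abs_of_neg (by linarith)
      linarith
    · have hx1 : 1 < x := h hx
      have : |2 * x - 1| = 2 * x - 1 := abs_of_nonneg (by linarith)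
      linarith

lemma hatFn_nonneg (x : ℝ) : 0 ≤ hatFn x := by rw [hatFn_eq_max]; exact le_max_right _ _

lemma hatFn_le_one (x : ℝ) : hatFn x ≤ 1 := by
  rw [hatFn_eq_max]
  exact max_le (by nlinarith [abs_nonneg (2*x-1)]) one_pos.le

lemma abs_hatFn_le_one (x : ℝ) : |hatFn x| ≤ 1 := by
  rw [abs_of_nonneg (hatFn_nonneg x)]; exact hatFn_le_one x

lemma hatFn_lip (x y : ℝ) : |hatFn x - hatFn y| ≤ 2 * |x - y| := by
  rw [hatFn_eq_max, hatFn_eq_max]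
  calc |max (1 - |2*x-1|) 0 - max (1 - |2*y-1|) 0|
      ≤ |(1 - |2*x-1|) - (1 - |2*y-1|)| := abs_max_sub_max_le_abs _ _ _
    _ = |(|2*y-1|) - (|2*x-1|)| := by ring_nf
    _ ≤ |(2*y-1) - (2*x-1)| := abs_abs_sub_abs_le_abs_sub _ _
    _ = 2 * |x - y| := by rw [show (2*y-1) - (2*x-1) = 2*(y-x) by ring, abs_mul,
        abs_of_nonneg (by norm_num : (0:ℝ) ≤ 2), abs_sub_comm]

lemma hatFn_eq_zero_of_ge_one {x : ℝ} (hx : 1 ≤ x) : hatFn x = 0 := by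
  unfold hatFn
  split_ifs with h
  · have : x = 1 := le_antisymm h.2 hx
    subst this; norm_num
  · rfl

lemma hatFn_support {x : ℝ} (hx : hatFn x ≠ 0) : 0 ≤ x ∧ x ≤ 1 := by
  unfold hatFn at hx; by_contra hc; rw [if_neg hc] at hx; exact hx rfl

-- from b.lean
lemma alt_sum_zero {m : ℕ} (hm : 1 ≤ m) :
    ∑ i ∈ range (m + 1), (-1 : ℝ) ^ (m - i) * (m.choose i : ℝ) = 0 := by
  have key : ∀ i ∈ range (m + 1), (-1 : ℝ) ^ (m - i) * (m.choose i : ℝ)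
      = (-1:ℝ)^m * ((-1:ℝ)^i * (m.choose i : ℝ)) := by
    intro i hi
    rw [mem_range] at hi
    have hi' : i ≤ m := Nat.lt_succ_iff.mp hi
    have : (-1:ℝ)^(m-i) * (-1:ℝ)^i = (-1:ℝ)^m := by
      rw [← pow_add, Nat.sub_add_cancel hi']
    have h2 : (-1:ℝ)^(m-i) = (-1:ℝ)^m * (-1:ℝ)^i := by
      have hsq : ((-1:ℝ)^i) * ((-1:ℝ)^i) = 1 := by
        rw [← pow_add, neg_one_pow_eq_one_iff_even (by norm_num)]; exact ⟨i, rfl⟩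
      calc (-1:ℝ)^(m-i) = (-1:ℝ)^(m-i) * ((-1:ℝ)^i * (-1:ℝ)^i) := by rw [hsq, mul_one]
        _ = (-1:ℝ)^m * (-1:ℝ)^i := by rw [← mul_assoc, this]
    rw [h2, mul_assoc]
  rw [Finset.sum_congr rfl key, ← Finset.mul_sum]
  have := Int.alternating_sum_range_choose_of_ne (Nat.one_le_iff_ne_zero.mp hm) (n := m)
  have hcast : ((∑ i ∈ range (m + 1), ((-1) ^ i * m.choose i : ℤ) : ℤ) : ℝ) = 0 := by
    rw [this]; norm_num
  push_cast at hcast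
  rw [hcast, mul_zero]

lemma alt_sum_i_zero {m : ℕ} (hm : 2 ≤ m) :
    ∑ i ∈ range (m + 1), (-1 : ℝ) ^ (m - i) * (m.choose i : ℝ) * (i : ℝ) = 0 := by
  rw [Finset.sum_range_succ'] -- ∑ i∈range(m+1) f i = ∑ i∈range m, f (i+1) + f 0
  simp only [Nat.cast_zero, mul_zero, add_zero]
  have key : ∀ i ∈ range m, (-1:ℝ)^(m-(i+1)) * (m.choose (i+1) : ℝ) * ((i+1 : ℕ) : ℝ)
      = (m:ℝ) * ((-1:ℝ)^((m-1)-i) * ((m-1).choose i : ℝ)) := by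
    intro i hi
    rw [mem_range] at hi
    have h1 : m - (i+1) = (m-1) - i := by omega
    have h2 : (m.choose (i+1) : ℝ) * ((i+1:ℕ) : ℝ) = (m:ℝ) * ((m-1).choose i : ℝ) := by
      have := Nat.add_one_mul_choose_eq (m-1) i
      have hm1 : m - 1 + 1 = m := by omega
      rw [hm1] at this
      -- this : m * (m-1).choose i = m.choose (i+1) * (i+1)
      have hc : ((m * (m-1).choose i : ℕ) : ℝ) = ((m.choose (i+1) * (i+1) : ℕ) : ℝ) := by
        exact_mod_cast congrArg (Nat.cast : ℕ → ℝ) this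
      push_cast at hc
      push_cast
      linarith
    rw [h1, mul_assoc, h2]; ring
  rw [Finset.sum_congr rfl key, ← Finset.mul_sum]
  have hm1 : m - 1 + 1 = m := by omega
  have := alt_sum_zero (m := m - 1) (by omega)
  rw [hm1] at this
  rw [this, mul_zero]

lemma fdiff_affine {m : ℕ} (hm : 2 ≤ m) (h : ℝ) (g : ℝ → ℝ) (x : ℝ) (a b : ℝ)
    (hg : ∀ i ∈ range (m+1), g (x + i * h) = a * (x + i * h) + b) :
    fdiffR m h g x = 0 := by
  unfold fdiffR
  rw [Finset.sum_congr rfl (fun i hi => by rw [hg i hi])]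
  have expand : ∀ i ∈ range (m+1), (-1:ℝ)^(m-i) * (m.choose i : ℝ) * (a * (x + i*h) + b)
      = (a*x+b) * ((-1:ℝ)^(m-i) * (m.choose i : ℝ))
        + (a*h) * ((-1:ℝ)^(m-i) * (m.choose i : ℝ) * (i:ℝ)) := by
    intro i _; ring
  rw [Finset.sum_congr rfl expand, Finset.sum_add_distrib, ← Finset.mul_sum, ← Finset.mul_sum,
    alt_sum_zero (by omega), alt_sum_i_zero hm]
  ring

lemma fdiff_zero_of_all_zero {m : ℕ} (h : ℝ) (g : ℝ → ℝ) (x : ℝ)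
    (hg : ∀ i ∈ range (m+1), g (x + i * h) = 0) :
    fdiffR m h g x = 0 := by
  unfold fdiffR
  rw [Finset.sum_congr rfl (fun i hi => by rw [hg i hi, mul_zero])]
  exact Finset.sum_const_zero

lemma abs_fdiff_le {m : ℕ} (h : ℝ) (g : ℝ → ℝ) (x : ℝ) (M : ℝ)
    (hg : ∀ i ∈ range (m+1), |g (x + i * h)| ≤ M) :
    |fdiffR m h g x| ≤ 2^m * M := by
  unfold fdiffR
  calc |∑ i ∈ range (m+1), (-1:ℝ)^(m-i) * (m.choose i : ℝ) * g (x + i*h)|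
      ≤ ∑ i ∈ range (m+1), |(-1:ℝ)^(m-i) * (m.choose i : ℝ) * g (x + i*h)| :=
        Finset.abs_sum_le_sum_abs _ _
    _ ≤ ∑ i ∈ range (m+1), (m.choose i : ℝ) * M := by
        apply Finset.sum_le_sum
        intro i hi
        rw [abs_mul, abs_mul, abs_pow, abs_neg, abs_one, one_pow, one_mul,
          Nat.abs_cast]
        exact mul_le_mul_of_nonneg_left (hg i hi) (Nat.cast_nonneg _)
    _ = 2^m * M := by
        rw [← Finset.sum_mul]
        congr 1
        have := Nat.sum_range_choose m
        calc ∑ i ∈ range (m+1), ((m.choose i : ℕ) : ℝ)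
            = ((∑ i ∈ range (m+1), m.choose i : ℕ) : ℝ) := by push_cast; ring
          _ = ((2^m : ℕ) : ℝ) := by rw [this]
          _ = 2^m := by push_cast; ring

lemma abs_fdiff_le_lip {m : ℕ} (hm : 1 ≤ m) (h : ℝ) (g : ℝ → ℝ) (x : ℝ) (L : ℝ)
    (hL : 0 ≤ L)
    (hg : ∀ i ∈ range (m+1), |g (x + i * h) - g x| ≤ L * (m * h)) :
    |fdiffR m h g x| ≤ 2^m * (L * (m * h)) := by
  have key : fdiffR m h g x
      = ∑ i ∈ range (m+1), (-1:ℝ)^(m-i) * (m.choose i : ℝ) * (g (x + i*h) - g x) := by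
    unfold fdiffR
    rw [Finset.sum_congr rfl (fun i hi => by ring_nf :
      ∀ i ∈ range (m+1), (-1:ℝ)^(m-i) * (m.choose i : ℝ) * (g (x + i*h) - g x)
        = (-1:ℝ)^(m-i) * (m.choose i : ℝ) * g (x + i*h)
          - (-1:ℝ)^(m-i) * (m.choose i : ℝ) * g x)]
    rw [Finset.sum_sub_distrib, ← Finset.sum_mul, alt_sum_zero hm, zero_mul, sub_zero]
  calc |fdiffR m h g x| = |∑ i ∈ range (m+1), (-1:ℝ)^(m-i) * (m.choose i : ℝ)
        * (g (x + i*h) - g x)| := by rw [key]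
    _ ≤ ∑ i ∈ range (m+1), |(-1:ℝ)^(m-i) * (m.choose i : ℝ) * (g (x + i*h) - g x)| :=
        Finset.abs_sum_le_sum_abs _ _
    _ ≤ ∑ i ∈ range (m+1), (m.choose i : ℝ) * (L * (m * h)) := by
        apply Finset.sum_le_sum
        intro i hi
        rw [abs_mul, abs_mul, abs_pow, abs_neg, abs_one, one_pow, one_mul, Nat.abs_cast]
        exact mul_le_mul_of_nonneg_left (hg i hi) (Nat.cast_nonneg _)
    _ = 2^m * (L * (m * h)) := by
        rw [← Finset.sum_mul]
        congr 1
        have := Nat.sum_range_choose m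
        calc ∑ i ∈ range (m+1), ((m.choose i : ℕ) : ℝ)
            = ((∑ i ∈ range (m+1), m.choose i : ℕ) : ℝ) := by push_cast; ring
          _ = ((2^m : ℕ) : ℝ) := by rw [this]
          _ = 2^m := by push_cast; ring

-- from c.lean
lemma hatj_support {j : ℕ} {x : ℝ} (hx : hatj j x ≠ 0) : 0 ≤ x ∧ x ≤ ((2:ℝ)^j)⁻¹ := by
  have h2 : (0:ℝ) < 2^j := by positivity
  obtain ⟨h1, h2'⟩ := hatFn_support hx
  have hinv : ((2:ℝ)^j)⁻¹ * 2^j = 1 := inv_mul_cancel₀ (ne_of_gt h2)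
  have hinvpos : (0:ℝ) < ((2:ℝ)^j)⁻¹ := inv_pos.mpr h2
  constructor
  · nlinarith
  · nlinarith

lemma hatj_lip (j : ℕ) (x y : ℝ) : |hatj j x - hatj j y| ≤ 2^(j+1) * |x - y| := by
  have := hatFn_lip ((2:ℝ)^j * x) ((2:ℝ)^j * y)
  unfold hatj
  calc |hatFn (2^j*x) - hatFn (2^j*y)| ≤ 2 * |2^j*x - 2^j*y| := this
    _ = 2^(j+1) * |x - y| := by
        rw [show (2:ℝ)^j*x - 2^j*y = 2^j*(x-y) by ring, abs_mul,
          abs_of_nonneg (by positivity : (0:ℝ) ≤ 2^j)]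
        ring

lemma abs_hatj_le_one (j : ℕ) (x : ℝ) : |hatj j x| ≤ 1 := abs_hatFn_le_one _

-- hat function piecewise formulas
lemma hatj_eq_left {j : ℕ} {y : ℝ} (h0 : 0 ≤ y) (h1 : y ≤ ((2:ℝ)^(j+1))⁻¹) :
    hatj j y = 2^(j+1) * y := by
  unfold hatj hatFn
  have h2 : (0:ℝ) < 2^j := by positivity
  have h2' : (0:ℝ) < 2^(j+1) := by positivity
  have hinv : ((2:ℝ)^(j+1))⁻¹ * 2^(j+1) = 1 := inv_mul_cancel₀ (ne_of_gt h2')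
  have hy1 : (2:ℝ)^(j+1) * y ≤ 1 := by nlinarith
  have hcond : 0 ≤ (2:ℝ)^j * y ∧ (2:ℝ)^j * y ≤ 1 := by
    constructor
    · positivity
    · nlinarith [pow_succ (2:ℝ) j]
  rw [if_pos hcond]
  have habs : |2 * ((2:ℝ)^j * y) - 1| = -(2 * ((2:ℝ)^j * y) - 1) := by
    apply abs_of_nonpos
    nlinarith [pow_succ (2:ℝ) j]
  rw [habs]
  have : (2:ℝ)^(j+1) = 2^j * 2 := pow_succ 2 j
  nlinarith

lemma hatj_eq_right {j : ℕ} {y : ℝ} (h0 : ((2:ℝ)^(j+1))⁻¹ ≤ y) (h1 : y ≤ ((2:ℝ)^j)⁻¹) :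
    hatj j y = 2 - 2^(j+1) * y := by
  unfold hatj hatFn
  have h2 : (0:ℝ) < 2^j := by positivity
  have h2' : (0:ℝ) < 2^(j+1) := by positivity
  have hinv : ((2:ℝ)^j)⁻¹ * 2^j = 1 := inv_mul_cancel₀ (ne_of_gt h2)
  have hinv' : ((2:ℝ)^(j+1))⁻¹ * 2^(j+1) = 1 := inv_mul_cancel₀ (ne_of_gt h2')
  have hsucc : (2:ℝ)^(j+1) = 2^j * 2 := pow_succ 2 j
  have hy0 : (0:ℝ) ≤ y := le_trans (by positivity) h0
  have hcond : 0 ≤ (2:ℝ)^j * y ∧ (2:ℝ)^j * y ≤ 1 := ⟨by positivity, by nlinarith⟩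
  rw [if_pos hcond]
  have hge : (1:ℝ) ≤ 2^(j+1) * y := by nlinarith
  have habs : |2 * ((2:ℝ)^j * y) - 1| = 2 * ((2:ℝ)^j * y) - 1 := by
    apply abs_of_nonneg; nlinarith
  rw [habs]; nlinarith

lemma hatj_eq_zero_of_nonpos {j : ℕ} {y : ℝ} (h0 : y ≤ 0) : hatj j y = 0 := by
  rcases lt_or_eq_of_le h0 with h | h
  · by_contra hc
    have := (hatj_support hc).1
    have h2 : (0:ℝ) < 2^j := by positivity
    nlinarith
  · subst h; unfold hatj hatFn; rw [mul_zero, if_pos ⟨le_refl 0, zero_le_one⟩]; norm_num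

lemma hatj_eq_zero_of_ge {j : ℕ} {y : ℝ} (h0 : ((2:ℝ)^j)⁻¹ ≤ y) : hatj j y = 0 := by
  by_contra hc
  have hs := (hatj_support hc).2
  have heq : y = ((2:ℝ)^j)⁻¹ := le_antisymm hs h0
  subst heq
  apply hc
  unfold hatj hatFn
  have h2 : (0:ℝ) < 2^j := by positivity
  have hmul : (2:ℝ)^j * ((2:ℝ)^j)⁻¹ = 1 := mul_inv_cancel₀ (ne_of_gt h2)
  rw [hmul, if_pos ⟨zero_le_one, le_refl 1⟩]
  norm_num




/-- if the interval `[x, x + m*h]` avoids all three breakpoints then the m-th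
difference of the hat vanishes (m ≥ 2). -/
lemma fdiff_hatj_breakpoints {m j : ℕ} (hm : 2 ≤ m) {h x : ℝ} (hh : 0 < h)
    (hb0 : ¬ (x ≤ 0 ∧ 0 ≤ x + m * h))
    (hb1 : ¬ (x ≤ ((2:ℝ)^(j+1))⁻¹ ∧ ((2:ℝ)^(j+1))⁻¹ ≤ x + m * h))
    (hb2 : ¬ (x ≤ ((2:ℝ)^j)⁻¹ ∧ ((2:ℝ)^j)⁻¹ ≤ x + m * h)) :
    fdiffR m h (hatj j) x = 0 := by
  have hmpos : (0:ℝ) < m := by exact_mod_cast Nat.pos_of_ne_zero (by omega)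
  have hxle : x ≤ x + m * h := by nlinarith
  have hpt : ∀ i ∈ range (m+1), x ≤ x + i * h ∧ x + i * h ≤ x + m * h := by
    intro i hi
    rw [mem_range] at hi
    have : (i:ℝ) ≤ m := by exact_mod_cast Nat.lt_succ_iff.mp hi
    constructor <;> nlinarith [hh.le, (Nat.cast_nonneg i : (0:ℝ) ≤ i)]
  have hc1pos : (0:ℝ) < ((2:ℝ)^(j+1))⁻¹ := by positivity
  have hc2 : ((2:ℝ)^(j+1))⁻¹ < ((2:ℝ)^j)⁻¹ := by
    apply inv_strictAnti₀ (by positivity)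
    rw [pow_succ]; nlinarith [pow_pos (by norm_num : (0:ℝ) < 2) j]
  push_neg at hb0 hb1 hb2
  rcases le_or_gt x 0 with hx0 | hx0
  · -- whole interval below 0
    have hlt : x + m * h < 0 := hb0 hx0
    apply fdiff_zero_of_all_zero
    intro i hi
    exact hatj_eq_zero_of_nonpos (le_of_lt (lt_of_le_of_lt (hpt i hi).2 hlt))
  rcases le_or_gt x ((2:ℝ)^(j+1))⁻¹ with hx1 | hx1
  · -- interval inside (0, c)
    have hlt : x + m * h < ((2:ℝ)^(j+1))⁻¹ := hb1 hx1
    apply fdiff_affine hm h _ _ (2^(j+1)) 0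
    intro i hi
    rw [hatj_eq_left (le_trans hx0.le (hpt i hi).1) (le_of_lt (lt_of_le_of_lt (hpt i hi).2 hlt))]
    ring
  rcases le_or_gt x ((2:ℝ)^j)⁻¹ with hx2 | hx2
  · -- interval inside (c, 2c)
    have hlt : x + m * h < ((2:ℝ)^j)⁻¹ := hb2 hx2
    apply fdiff_affine hm h _ _ (-(2^(j+1))) 2
    intro i hi
    rw [hatj_eq_right (le_trans hx1.le (hpt i hi).1) (le_of_lt (lt_of_le_of_lt (hpt i hi).2 hlt))]
    ring
  · -- interval above 2c
    apply fdiff_zero_of_all_zero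
    intro i hi
    exact hatj_eq_zero_of_ge (le_trans hx2.le (hpt i hi).1)

-- from d.lean
/-- general eLpNorm bound from a pointwise indicator bound -/
lemma eLpNorm_le_of_indicator {p : ℝ} (hp : 0 < p) (f : ℝ → ℝ) (S : Set ℝ)
    (hS : MeasurableSet S) {M V : ℝ} (hM : 0 ≤ M) (hV : 0 ≤ V)
    (hbound : ∀ x, |f x| ≤ S.indicator (fun _ => M) x)
    (hvol : volume S ≤ ENNReal.ofReal V) :
    eLpNorm f (ENNReal.ofReal p) volume ≤ ENNReal.ofReal (M * V ^ (1/p)) := by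
  have hp0 : ENNReal.ofReal p ≠ 0 := by
    simp [ENNReal.ofReal_eq_zero, not_le, hp]
  have hptop : ENNReal.ofReal p ≠ ∞ := ENNReal.ofReal_ne_top
  have h1 : eLpNorm f (ENNReal.ofReal p) volume
      ≤ eLpNorm (S.indicator fun _ => M) (ENNReal.ofReal p) volume := by
    apply eLpNorm_mono
    intro x
    rw [Real.norm_eq_abs, Real.norm_eq_abs]
    refine le_trans (hbound x) ?_
    by_cases hx : x ∈ S
    · classical
      simp only [Set.indicator_of_mem hx]
      exact le_abs_self M
    · simp only [Set.indicator_of_notMem hx, abs_zero]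
      exact le_refl 0
  rw [eLpNorm_indicator_const hS hp0 hptop] at h1
  refine le_trans h1 ?_
  have htoreal : (ENNReal.ofReal p).toReal = p := ENNReal.toReal_ofReal hp.le
  rw [htoreal]
  calc (‖M‖₊ : ℝ≥0∞) * volume S ^ (1/p)
      ≤ ENNReal.ofReal M * (ENNReal.ofReal V) ^ (1/p) := by
        apply mul_le_mul'
        · rw [show ((‖M‖₊ : ℝ≥0∞)) = ENNReal.ofReal M by
            exact Real.enorm_eq_ofReal hM]
        · exact ENNReal.rpow_le_rpow hvol (by positivity)
    _ = ENNReal.ofReal (M * V ^ (1/p)) := by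
        rw [ENNReal.ofReal_rpow_of_nonneg hV (by positivity : (0:ℝ) ≤ 1/p),
          ← ENNReal.ofReal_mul hM]

-- from e.lean
lemma two_zpow_neg_k (k : ℕ) : (2:ℝ) ^ (-(k:ℤ)) = ((2:ℝ)^k)⁻¹ := by
  rw [zpow_neg, zpow_natCast]

/-- Bound 1: valid for all k, any m ≥ 1. -/
lemma modk_bound1 {p : ℝ} (hp : 0 < p) (m j k : ℕ) :
    modk p m k (hatj j) ≤
      ENNReal.ofReal (2^m * ((m+1) * ((2:ℝ)^j)⁻¹) ^ (1/p)) := by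
  unfold modk
  apply iSup₂_le
  intro h hh
  obtain ⟨hh0, _⟩ := hh
  set S : Set ℝ := ⋃ i ∈ range (m+1),
    Set.Icc (-(i:ℝ)*h) (((2:ℝ)^j)⁻¹ - i*h) with hSdef
  have hS : MeasurableSet S := by
    apply Set.Finite.measurableSet_biUnion (Finset.finite_toSet _)
    intro i _; exact measurableSet_Icc
  apply eLpNorm_le_of_indicator hp _ S hS (by positivity) (by positivity)
  · intro x
    by_cases hx : x ∈ S
    · rw [Set.indicator_of_mem hx]
      have := abs_fdiff_le (m := m) h (hatj j) x 1 (fun i _ => abs_hatj_le_one j _)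
      simpa using this
    · rw [Set.indicator_of_notMem hx, fdiff_zero_of_all_zero]
      · simp
      · intro i hi
        by_contra hc
        apply hx
        obtain ⟨h1, h2⟩ := hatj_support hc
        rw [hSdef]
        apply Set.mem_biUnion hi
        constructor <;> [linarith; linarith]
  · rw [hSdef]
    calc volume (⋃ i ∈ range (m+1), Set.Icc (-(i:ℝ)*h) (((2:ℝ)^j)⁻¹ - i*h))
        ≤ ∑ i ∈ range (m+1), volume (Set.Icc (-(i:ℝ)*h) (((2:ℝ)^j)⁻¹ - i*h)) :=
          measure_biUnion_finset_le _ _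
      _ = ∑ _i ∈ range (m+1), ENNReal.ofReal (((2:ℝ)^j)⁻¹) := by
          apply Finset.sum_congr rfl
          intro i _
          rw [Real.volume_Icc]
          congr 1
          ring
      _ = ((m+1 : ℕ) : ℝ≥0∞) * ENNReal.ofReal (((2:ℝ)^j)⁻¹) := by
          rw [Finset.sum_const, card_range, nsmul_eq_mul]
      _ = ENNReal.ofReal ((m+1) * ((2:ℝ)^j)⁻¹) := by
          rw [ENNReal.ofReal_mul (by positivity), ← ENNReal.ofReal_natCast (m+1)]
          congr 1
          push_cast
          ring

/-- Bound 2 (m ≥ 2, near breakpoints). -/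
lemma modk_bound2 {p : ℝ} (hp : 0 < p) {m : ℕ} (hm : 2 ≤ m) (j k : ℕ) :
    modk p m k (hatj j) ≤
      ENNReal.ofReal ((2^m * (2^(j+1) * (m * ((2:ℝ)^k)⁻¹)))
        * (3 * (m * ((2:ℝ)^k)⁻¹)) ^ (1/p)) := by
  unfold modk
  apply iSup₂_le
  intro h hh
  obtain ⟨hh0, hh1⟩ := hh
  rw [two_zpow_neg_k] at hh1
  have hm1 : (1:ℕ) ≤ m := by omega
  have hmr : (0:ℝ) < m := by exact_mod_cast Nat.pos_of_ne_zero (by omega)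
  set c1 : ℝ := ((2:ℝ)^(j+1))⁻¹
  set c2 : ℝ := ((2:ℝ)^j)⁻¹
  set S : Set ℝ := Set.Icc (0 - m*h) 0 ∪ Set.Icc (c1 - m*h) c1 ∪ Set.Icc (c2 - m*h) c2
    with hSdef
  have hS : MeasurableSet S :=
    ((measurableSet_Icc.union measurableSet_Icc).union measurableSet_Icc)
  apply eLpNorm_le_of_indicator hp _ S hS (by positivity) (by positivity)
  · intro x
    by_cases hx : x ∈ S
    · rw [Set.indicator_of_mem hx]
      have hb : |fdiffR m h (hatj j) x| ≤ 2^m * (2^(j+1) * (m * h)) := by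
        apply abs_fdiff_le_lip hm1 h _ _ _ (by positivity)
        intro i hi
        rw [mem_range] at hi
        have hic : (i:ℝ) ≤ m := by exact_mod_cast Nat.lt_succ_iff.mp hi
        calc |hatj j (x + i*h) - hatj j x| ≤ 2^(j+1) * |x + i*h - x| := hatj_lip j _ _
          _ = 2^(j+1) * (i * h) := by
              rw [show x + i*h - x = i*h by ring, abs_of_nonneg (by positivity)]
          _ ≤ 2^(j+1) * (m * h) := by
              apply mul_le_mul_of_nonneg_left _ (by positivity)
              nlinarith
      refine le_trans hb ?_
      have : (2:ℝ)^(j+1) * (m * h) ≤ 2^(j+1) * (m * ((2:ℝ)^k)⁻¹) := by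
        apply mul_le_mul_of_nonneg_left _ (by positivity)
        apply mul_le_mul_of_nonneg_left hh1 (by positivity)
      nlinarith [pow_pos (by norm_num : (0:ℝ) < 2) m]
    · rw [Set.indicator_of_notMem hx]
      rw [fdiff_hatj_breakpoints hm hh0] <;> try simp
      · intro hb0
        by_contra hc
        push_neg at hc
        apply hx
        rw [hSdef]
        left; left
        exact ⟨by linarith, hb0⟩
      · intro hb1
        by_contra hc
        push_neg at hc
        apply hx
        rw [hSdef]
        left; right
        exact ⟨by linarith, hb1⟩
      · intro hb2
        by_contra hc
        push_neg at hc
        apply hx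
        rw [hSdef]
        right
        exact ⟨by linarith, hb2⟩
  · rw [hSdef]
    have hIcc : ∀ b : ℝ, volume (Set.Icc (b - m*h) b) = ENNReal.ofReal (m*h) := by
      intro b
      rw [Real.volume_Icc]
      congr 1
      ring
    calc volume (Set.Icc (0 - m*h) 0 ∪ Set.Icc (c1 - m*h) c1 ∪ Set.Icc (c2 - m*h) c2)
        ≤ volume (Set.Icc (0 - m*h) 0 ∪ Set.Icc (c1 - m*h) c1)
          + volume (Set.Icc (c2 - m*h) c2) := measure_union_le _ _
      _ ≤ volume (Set.Icc (0 - m*h) 0) + volume (Set.Icc (c1 - m*h) c1)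
          + volume (Set.Icc (c2 - m*h) c2) := by
            exact add_le_add_left (measure_union_le _ _) _
      _ = ENNReal.ofReal (m*h) + ENNReal.ofReal (m*h) + ENNReal.ofReal (m*h) := by
            rw [hIcc, hIcc, hIcc]
      _ ≤ ENNReal.ofReal (3 * (m * ((2:ℝ)^k)⁻¹)) := by
            rw [← ENNReal.ofReal_add (by positivity) (by positivity),
              ← ENNReal.ofReal_add (by positivity) (by positivity)]
            apply ENNReal.ofReal_le_ofReal
            nlinarith

/-- Bound 3 (m = 1). -/
lemma modk_bound3 {p : ℝ} (hp : 0 < p) (j k : ℕ) :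
    modk p 1 k (hatj j) ≤
      ENNReal.ofReal ((2^1 * (2^(j+1) * (1 * ((2:ℝ)^k)⁻¹)))
        * ((1+1) * ((2:ℝ)^j)⁻¹) ^ (1/p)) := by
  unfold modk
  apply iSup₂_le
  intro h hh
  obtain ⟨hh0, hh1⟩ := hh
  rw [two_zpow_neg_k] at hh1
  set S : Set ℝ := ⋃ i ∈ range 2,
    Set.Icc (-(i:ℝ)*h) (((2:ℝ)^j)⁻¹ - i*h) with hSdef
  have hS : MeasurableSet S := by
    apply Set.Finite.measurableSet_biUnion (Finset.finite_toSet _)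
    intro i _; exact measurableSet_Icc
  apply eLpNorm_le_of_indicator hp _ S hS (by positivity) (by positivity)
  · intro x
    by_cases hx : x ∈ S
    · rw [Set.indicator_of_mem hx]
      have hb : |fdiffR 1 h (hatj j) x| ≤ 2^1 * (2^(j+1) * (((1:ℕ):ℝ) * h)) := by
        apply abs_fdiff_le_lip (le_refl 1) h _ _ _ (by positivity)
        intro i hi
        rw [mem_range] at hi
        have hic : (i:ℝ) ≤ 1 := by exact_mod_cast Nat.lt_succ_iff.mp hi
        calc |hatj j (x + i*h) - hatj j x| ≤ 2^(j+1) * |x + i*h - x| := hatj_lip j _ _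
          _ = 2^(j+1) * (i * h) := by
              rw [show x + i*h - x = i*h by ring, abs_of_nonneg (by positivity)]
          _ ≤ 2^(j+1) * (((1:ℕ):ℝ) * h) := by
              apply mul_le_mul_of_nonneg_left _ (by positivity)
              push_cast
              nlinarith
      push_cast at hb
      refine le_trans hb ?_
      nlinarith [pow_pos (by norm_num : (0:ℝ) < 2) (j+1)]
    · rw [Set.indicator_of_notMem hx, fdiff_zero_of_all_zero]
      · simp
      · intro i hi
        by_contra hc
        apply hx
        obtain ⟨h1, h2⟩ := hatj_support hc
        rw [hSdef]
        apply Set.mem_biUnion hi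
        constructor <;> [linarith; linarith]
  · rw [hSdef]
    calc volume (⋃ i ∈ range 2, Set.Icc (-(i:ℝ)*h) (((2:ℝ)^j)⁻¹ - i*h))
        ≤ ∑ i ∈ range 2, volume (Set.Icc (-(i:ℝ)*h) (((2:ℝ)^j)⁻¹ - i*h)) :=
          measure_biUnion_finset_le _ _
      _ = ∑ _i ∈ range 2, ENNReal.ofReal (((2:ℝ)^j)⁻¹) := by
          apply Finset.sum_congr rfl
          intro i _
          rw [Real.volume_Icc]
          congr 1
          ring
      _ = ((2 : ℕ) : ℝ≥0∞) * ENNReal.ofReal (((2:ℝ)^j)⁻¹) := by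
          rw [Finset.sum_const, card_range, nsmul_eq_mul]
      _ = ENNReal.ofReal ((1+1) * ((2:ℝ)^j)⁻¹) := by
          rw [ENNReal.ofReal_mul (by positivity), ← ENNReal.ofReal_natCast 2]
          congr 1
          push_cast
          ring

-- from f.lean
lemma two_pow_inv_eq (j : ℕ) : ((2:ℝ)^j)⁻¹ = (2:ℝ)^(-(j:ℝ)) := by
  rw [← Real.rpow_natCast 2 j, ← Real.rpow_neg (by norm_num : (0:ℝ) ≤ 2)]

lemma rpow_inv_pow (a : ℝ) (n : ℕ) : (((2:ℝ)^a)⁻¹)^n = (2:ℝ)^(-(a * n)) := by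
  rw [← Real.rpow_neg (by norm_num : (0:ℝ) ≤ 2), ← Real.rpow_natCast ((2:ℝ)^(-a)) n,
    ← Real.rpow_mul (by norm_num : (0:ℝ) ≤ 2)]
  ring_nf

lemma claim1 {p : ℝ} (hp : 0 < p) (m j k : ℕ) (hkj : k ≤ j) :
    (2:ℝ)^((k:ℝ)/p) * (2^m * (((m:ℝ)+1) * ((2:ℝ)^j)⁻¹)^(1/p))
      = (2^m * ((m:ℝ)+1)^(1/p)) * ((((2:ℝ)^(1/p))⁻¹)^(j-k)) := by
  have hm1 : (0:ℝ) ≤ (m:ℝ)+1 := by positivity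
  rw [two_pow_inv_eq, Real.mul_rpow hm1 (by positivity),
    ← Real.rpow_natCast 2 m, ← Real.rpow_mul (by norm_num : (0:ℝ) ≤ 2),
    rpow_inv_pow]
  rw [Nat.cast_sub hkj]
  rw [show (2:ℝ)^((k:ℝ)/p) * ((2:ℝ)^(m:ℝ) * (((m:ℝ)+1)^(1/p) * (2:ℝ)^(-(j:ℝ)*(1/p))))
      = ((2:ℝ)^((k:ℝ)/p) * (2:ℝ)^(-(j:ℝ)*(1/p))) * ((2:ℝ)^(m:ℝ) * ((m:ℝ)+1)^(1/p)) by ring,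
    ← Real.rpow_add (by norm_num : (0:ℝ) < 2)]
  rw [show (2:ℝ)^(m:ℝ) * ((m:ℝ)+1)^(1/p) * (2:ℝ)^(-(1/p * ((j:ℝ) - (k:ℝ))))
      = ((2:ℝ)^(-(1/p * ((j:ℝ) - (k:ℝ))))) * ((2:ℝ)^(m:ℝ) * ((m:ℝ)+1)^(1/p)) by ring]
  congr 2
  field_simp
  ring

lemma claim2 {p : ℝ} (hp : 0 < p) (m j k : ℕ) (hjk : j ≤ k) :
    (2:ℝ)^((k:ℝ)/p) * ((2^m * (2^(j+1) * ((m:ℝ) * ((2:ℝ)^k)⁻¹)))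
        * (3 * ((m:ℝ) * ((2:ℝ)^k)⁻¹)) ^ (1/p))
      = (2^(m+1) * (m:ℝ) * (3*(m:ℝ))^(1/p)) * ((2:ℝ)⁻¹)^(k-j) := by
  have hm0 : (0:ℝ) ≤ 3 * (m:ℝ) := by positivity
  have h3 : 3 * ((m:ℝ) * ((2:ℝ)^k)⁻¹) = (3*(m:ℝ)) * ((2:ℝ)^k)⁻¹ := by ring
  rw [h3, two_pow_inv_eq, Real.mul_rpow hm0 (by positivity),
    ← Real.rpow_natCast 2 m, ← Real.rpow_natCast 2 (j+1), ← Real.rpow_natCast 2 (m+1),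
    ← Real.rpow_mul (by norm_num : (0:ℝ) ≤ 2)]
  have hik : ((2:ℝ)⁻¹)^(k-j) = (2:ℝ)^(-(((k:ℝ))-(j:ℝ))) := by
    have h' := rpow_inv_pow 1 (k-j)
    rw [Real.rpow_one] at h'
    rw [h', Nat.cast_sub hjk]
    ring_nf
  rw [hik]
  rw [show ((2:ℝ)^((k:ℝ)/p) * ((2:ℝ)^((m:ℕ):ℝ) * ((2:ℝ)^(((j+1:ℕ)):ℝ) * ((m:ℝ) * (2:ℝ)^(-(k:ℝ))))
      * ((3*(m:ℝ))^(1/p) * (2:ℝ)^(-(k:ℝ)*(1/p)))))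
      = ((m:ℝ) * (3*(m:ℝ))^(1/p)) * (((2:ℝ)^((k:ℝ)/p) * (2:ℝ)^(-(k:ℝ)*(1/p)))
        * ((2:ℝ)^((m:ℕ):ℝ) * ((2:ℝ)^(((j+1:ℕ)):ℝ) * (2:ℝ)^(-(k:ℝ))))) by ring,
    ← Real.rpow_add (by norm_num : (0:ℝ) < 2),
    ← Real.rpow_add (by norm_num : (0:ℝ) < 2),
    ← Real.rpow_add (by norm_num : (0:ℝ) < 2)]
  have hexp0 : (k:ℝ)/p + -(k:ℝ)*(1/p) = 0 := by field_simp; ring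
  rw [hexp0, Real.rpow_zero, one_mul]
  rw [show ((2:ℝ) ^ (((m + 1:ℕ)):ℝ) * (m:ℝ) * (3 * (m:ℝ)) ^ (1 / p) * (2:ℝ) ^ (-((k:ℝ) - (j:ℝ))))
      = (m:ℝ) * (3 * (m:ℝ)) ^ (1 / p) * ((2:ℝ) ^ (((m + 1:ℕ)):ℝ) * (2:ℝ) ^ (-((k:ℝ) - (j:ℝ)))) by ring,
    ← Real.rpow_add (by norm_num : (0:ℝ) < 2)]
  congr 1
  push_cast
  ring

lemma claim3 {p : ℝ} (hp : 0 < p) (j k : ℕ) (hjk : j ≤ k) :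
    (2:ℝ)^((k:ℝ)/p) * ((2^1 * (2^(j+1) * (1 * ((2:ℝ)^k)⁻¹)))
        * ((1+1) * ((2:ℝ)^j)⁻¹) ^ (1/p))
      = (4 * (2:ℝ)^(1/p)) * ((2:ℝ)^(1/p - 1))^(k-j) := by
  have h2 : ((1:ℝ)+1) = (2:ℝ) := by norm_num
  rw [h2, two_pow_inv_eq, two_pow_inv_eq,
    show (2:ℝ) * (2:ℝ)^(-(j:ℝ)) = (2:ℝ)^(1:ℝ) * (2:ℝ)^(-(j:ℝ)) by norm_num,
    ← Real.rpow_add (by norm_num : (0:ℝ) < 2),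
    ← Real.rpow_mul (by norm_num : (0:ℝ) ≤ 2),
    ← Real.rpow_natCast ((2:ℝ)^(1/p - 1)) (k-j),
    ← Real.rpow_mul (by norm_num : (0:ℝ) ≤ 2),
    ← Real.rpow_natCast 2 (j+1),
    Nat.cast_sub hjk]
  rw [show (2:ℝ)^((k:ℝ)/p) * ((2:ℝ)^1 * ((2:ℝ)^(((j+1:ℕ)):ℝ) * (1 * (2:ℝ)^(-(k:ℝ))))
      * (2:ℝ)^((1 + -(j:ℝ))*(1/p)))
      = 2 * ((2:ℝ)^((k:ℝ)/p) * ((2:ℝ)^(((j+1:ℕ)):ℝ) * (2:ℝ)^(-(k:ℝ))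
        * (2:ℝ)^((1 + -(j:ℝ))*(1/p)))) by norm_num; ring,
    ← Real.rpow_add (by norm_num : (0:ℝ) < 2),
    ← Real.rpow_add (by norm_num : (0:ℝ) < 2),
    ← Real.rpow_add (by norm_num : (0:ℝ) < 2)]
  rw [show (4:ℝ) * (2:ℝ)^(1/p) * (2:ℝ)^((1/p-1)*((k:ℝ)-(j:ℝ)))
      = 2 * (2 * ((2:ℝ)^(1/p) * (2:ℝ)^((1/p-1)*((k:ℝ)-(j:ℝ))))) by ring,
    show (2:ℝ) * ((2:ℝ)^(1/p) * (2:ℝ)^((1/p-1)*((k:ℝ)-(j:ℝ))))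
      = (2:ℝ)^(1:ℝ) * ((2:ℝ)^(1/p) * (2:ℝ)^((1/p-1)*((k:ℝ)-(j:ℝ)))) by norm_num,
    ← Real.rpow_add (by norm_num : (0:ℝ) < 2),
    ← Real.rpow_add (by norm_num : (0:ℝ) < 2)]
  congr 2
  push_cast
  field_simp
  ring

-- from g.lean
lemma eLpNorm_hatj_le {p : ℝ} (hp : 0 < p) (j : ℕ) :
    eLpNorm (hatj j) (ENNReal.ofReal p) volume ≤ 1 := by
  have h := eLpNorm_le_of_indicator hp (hatj j) (Set.Icc 0 ((2:ℝ)^j)⁻¹)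
    measurableSet_Icc zero_le_one zero_le_one ?_ ?_
  · refine le_trans h ?_
    rw [Real.one_rpow, mul_one, ENNReal.ofReal_one]
  · intro x
    by_cases hx : x ∈ Set.Icc 0 ((2:ℝ)^j)⁻¹
    · rw [Set.indicator_of_mem hx]; exact abs_hatj_le_one j x
    · rw [Set.indicator_of_notMem hx]
      by_contra hc
      push_neg at hc
      have : hatj j x ≠ 0 := by
        intro h0; rw [h0] at hc; simp at hc
      exact hx (hatj_support this)
  · rw [Real.volume_Icc]
    apply ENNReal.ofReal_le_ofReal
    have h1 : (1:ℝ) ≤ 2^j := one_le_pow₀ (by norm_num)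
    have := inv_le_one_of_one_le₀ h1
    linarith

lemma tk_bound {p : ℝ} (hp : 0 < p) {m : ℕ} (hm : 1 / p < (m:ℝ)) :
    ∃ c ρ : ℝ, 0 < c ∧ 0 < ρ ∧ ρ < 1 ∧ ∀ j k : ℕ,
      ENNReal.ofReal ((2:ℝ)^((k:ℝ)/p)) * modk p m k (hatj j)
        ≤ ENNReal.ofReal (c * ρ ^ (Nat.dist j k)) := by
  have hppos : 0 < 1/p := by positivity
  have hm1 : 1 ≤ m := by
    by_contra hc
    push_neg at hc
    interval_cases m
    · simp at hm; linarith
  have hρ1pos : (0:ℝ) < ((2:ℝ)^(1/p))⁻¹ := by positivity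
  have h2gt1 : (1:ℝ) < (2:ℝ)^(1/p) := by
    apply Real.one_lt_rpow_iff_of_pos (by norm_num) |>.mpr
    left; exact ⟨by norm_num, hppos⟩
  have hρ1lt : ((2:ℝ)^(1/p))⁻¹ < 1 := by
    rw [inv_lt_one_iff₀]; right; exact h2gt1
  -- case split on m
  rcases eq_or_lt_of_le hm1 with hm1' | hm2
  · -- m = 1
    have hmeq : m = 1 := hm1'.symm
    subst hmeq
    have hp1 : 1 < p := by
      rw [div_lt_iff₀ hp] at hm; push_cast at hm; nlinarith
    have hρ3pos : (0:ℝ) < (2:ℝ)^(1/p - 1) := Real.rpow_pos_of_pos (by norm_num) _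
    have hρ3lt : (2:ℝ)^(1/p - 1) < 1 := by
      apply Real.rpow_lt_one_of_one_lt_of_neg (by norm_num)
      have : 1/p < 1 := by rw [div_lt_one hp]; linarith
      linarith
    refine ⟨max (2^1 * ((1:ℝ)+1)^(1/p)) (4 * (2:ℝ)^(1/p)),
      max (((2:ℝ)^(1/p))⁻¹) ((2:ℝ)^(1/p - 1)), ?_, ?_, ?_, ?_⟩
    · apply lt_max_of_lt_left; positivity
    · exact lt_max_of_lt_left hρ1pos
    · exact max_lt hρ1lt hρ3lt
    · intro j k
      rcases le_total k j with hkj | hjk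
      · calc ENNReal.ofReal ((2:ℝ)^((k:ℝ)/p)) * modk p 1 k (hatj j)
            ≤ ENNReal.ofReal ((2:ℝ)^((k:ℝ)/p)) *
              ENNReal.ofReal (2^1 * (((1:ℝ)+1) * ((2:ℝ)^j)⁻¹) ^ (1/p)) :=
              mul_le_mul_right (by simpa using modk_bound1 hp 1 j k) _
          _ = ENNReal.ofReal ((2:ℝ)^((k:ℝ)/p) * (2^1 * (((1:ℝ)+1) * ((2:ℝ)^j)⁻¹) ^ (1/p))) :=
              (ENNReal.ofReal_mul (by positivity)).symm
          _ = ENNReal.ofReal ((2^1 * ((1:ℝ)+1)^(1/p)) * ((((2:ℝ)^(1/p))⁻¹)^(j-k))) := by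
              have hcl := claim1 hp 1 j k hkj
              norm_num at hcl ⊢
              rw [hcl]
          _ ≤ ENNReal.ofReal (max (2^1 * ((1:ℝ)+1)^(1/p)) (4 * (2:ℝ)^(1/p))
              * (max (((2:ℝ)^(1/p))⁻¹) ((2:ℝ)^(1/p - 1)))^(Nat.dist j k)) := by
              apply ENNReal.ofReal_le_ofReal
              rw [Nat.dist_eq_sub_of_le_right hkj]
              apply mul_le_mul (le_max_left _ _)
                (pow_le_pow_left₀ hρ1pos.le (le_max_left _ _) _) (by positivity)
                (by positivity)
      · calc ENNReal.ofReal ((2:ℝ)^((k:ℝ)/p)) * modk p 1 k (hatj j)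
            ≤ ENNReal.ofReal ((2:ℝ)^((k:ℝ)/p)) *
              ENNReal.ofReal ((2^1 * (2^(j+1) * (1 * ((2:ℝ)^k)⁻¹)))
                * ((1+1) * ((2:ℝ)^j)⁻¹) ^ (1/p)) :=
              mul_le_mul_right (modk_bound3 hp j k) _
          _ = ENNReal.ofReal ((2:ℝ)^((k:ℝ)/p) * ((2^1 * (2^(j+1) * (1 * ((2:ℝ)^k)⁻¹)))
                * ((1+1) * ((2:ℝ)^j)⁻¹) ^ (1/p))) :=
              (ENNReal.ofReal_mul (by positivity)).symm
          _ = ENNReal.ofReal ((4 * (2:ℝ)^(1/p)) * ((2:ℝ)^(1/p - 1))^(k-j)) := by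
              rw [claim3 hp j k hjk]
          _ ≤ ENNReal.ofReal (max (2^1 * ((1:ℝ)+1)^(1/p)) (4 * (2:ℝ)^(1/p))
              * (max (((2:ℝ)^(1/p))⁻¹) ((2:ℝ)^(1/p - 1)))^(Nat.dist j k)) := by
              apply ENNReal.ofReal_le_ofReal
              rw [Nat.dist_eq_sub_of_le hjk]
              apply mul_le_mul (le_max_right _ _)
                (pow_le_pow_left₀ hρ3pos.le (le_max_right _ _) _) (by positivity)
                (by positivity)
  · -- m ≥ 2
    have hm2' : 2 ≤ m := hm2
    have hmr : (0:ℝ) < m := by exact_mod_cast Nat.pos_of_ne_zero (by omega)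
    refine ⟨max (2^m * ((m:ℝ)+1)^(1/p)) (2^(m+1) * (m:ℝ) * (3*(m:ℝ))^(1/p)),
      max (((2:ℝ)^(1/p))⁻¹) ((2:ℝ)⁻¹), ?_, ?_, ?_, ?_⟩
    · apply lt_max_of_lt_left; positivity
    · exact lt_max_of_lt_left hρ1pos
    · exact max_lt hρ1lt (by norm_num)
    · intro j k
      rcases le_total k j with hkj | hjk
      · calc ENNReal.ofReal ((2:ℝ)^((k:ℝ)/p)) * modk p m k (hatj j)
            ≤ ENNReal.ofReal ((2:ℝ)^((k:ℝ)/p)) *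
              ENNReal.ofReal (2^m * (((m:ℝ)+1) * ((2:ℝ)^j)⁻¹) ^ (1/p)) :=
              mul_le_mul_right (modk_bound1 hp m j k) _
          _ = ENNReal.ofReal ((2:ℝ)^((k:ℝ)/p) * (2^m * (((m:ℝ)+1) * ((2:ℝ)^j)⁻¹) ^ (1/p))) :=
              (ENNReal.ofReal_mul (by positivity)).symm
          _ = ENNReal.ofReal ((2^m * ((m:ℝ)+1)^(1/p)) * ((((2:ℝ)^(1/p))⁻¹)^(j-k))) := by
              rw [claim1 hp m j k hkj]
          _ ≤ ENNReal.ofReal (max (2^m * ((m:ℝ)+1)^(1/p)) (2^(m+1) * (m:ℝ) * (3*(m:ℝ))^(1/p))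
              * (max (((2:ℝ)^(1/p))⁻¹) ((2:ℝ)⁻¹))^(Nat.dist j k)) := by
              apply ENNReal.ofReal_le_ofReal
              rw [Nat.dist_eq_sub_of_le_right hkj]
              apply mul_le_mul (le_max_left _ _)
                (pow_le_pow_left₀ hρ1pos.le (le_max_left _ _) _) (by positivity)
                (by positivity)
      · calc ENNReal.ofReal ((2:ℝ)^((k:ℝ)/p)) * modk p m k (hatj j)
            ≤ ENNReal.ofReal ((2:ℝ)^((k:ℝ)/p)) *
              ENNReal.ofReal ((2^m * (2^(j+1) * ((m:ℝ) * ((2:ℝ)^k)⁻¹)))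
                * (3 * ((m:ℝ) * ((2:ℝ)^k)⁻¹)) ^ (1/p)) :=
              mul_le_mul_right (modk_bound2 hp hm2' j k) _
          _ = ENNReal.ofReal ((2:ℝ)^((k:ℝ)/p) * ((2^m * (2^(j+1) * ((m:ℝ) * ((2:ℝ)^k)⁻¹)))
                * (3 * ((m:ℝ) * ((2:ℝ)^k)⁻¹)) ^ (1/p))) :=
              (ENNReal.ofReal_mul (by positivity)).symm
          _ = ENNReal.ofReal ((2^(m+1) * (m:ℝ) * (3*(m:ℝ))^(1/p)) * ((2:ℝ)⁻¹)^(k-j)) := by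
              rw [claim2 hp m j k hjk]
          _ ≤ ENNReal.ofReal (max (2^m * ((m:ℝ)+1)^(1/p)) (2^(m+1) * (m:ℝ) * (3*(m:ℝ))^(1/p))
              * (max (((2:ℝ)^(1/p))⁻¹) ((2:ℝ)⁻¹))^(Nat.dist j k)) := by
              apply ENNReal.ofReal_le_ofReal
              rw [Nat.dist_eq_sub_of_le hjk]
              apply mul_le_mul (le_max_right _ _)
                (pow_le_pow_left₀ (by norm_num) (le_max_right _ _) _) (by positivity)
                (by positivity)

-- from h.lean
set_option maxHeartbeats 1000000 in
/-- From a geometric bound on terms, bound the q-sum part uniformly. -/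
lemma qsum_bound (q : ℝ≥0∞) (hq : 0 < q) (c ρ : ℝ) (hc : 0 < c) (hρ0 : 0 < ρ)
    (hρ1 : ρ < 1) (t : ℕ → ℕ → ℝ≥0∞)
    (ht : ∀ j k, t j k ≤ ENNReal.ofReal (c * ρ ^ (Nat.dist j k))) :
    ∃ E : ℝ≥0∞, E ≠ ⊤ ∧ ∀ j : ℕ,
      (if q = ⊤ then ⨆ k : ℕ, t j k
       else (∑' k : ℕ, (t j k) ^ q.toReal) ^ (1 / q.toReal)) ≤ E := by
  by_cases hqt : q = ⊤
  · refine ⟨ENNReal.ofReal c, ENNReal.ofReal_ne_top, fun j => ?_⟩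
    rw [if_pos hqt]
    apply iSup_le
    intro k
    refine le_trans (ht j k) (ENNReal.ofReal_le_ofReal ?_)
    calc c * ρ ^ (Nat.dist j k) ≤ c * 1 := by
          apply mul_le_mul_of_nonneg_left _ hc.le
          exact pow_le_one₀ hρ0.le hρ1.le
      _ = c := mul_one c
  · have hQ : 0 < q.toReal := ENNReal.toReal_pos hq.ne' hqt
    set Q := q.toReal with hQdef
    set σ : ℝ≥0∞ := ENNReal.ofReal (ρ ^ Q) with hσdef
    have hσ1 : σ < 1 := by
      rw [hσdef, ← ENNReal.ofReal_one]
      exact ENNReal.ofReal_lt_ofReal_iff_of_nonneg (by positivity) |>.mpr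
        (Real.rpow_lt_one hρ0.le hρ1 hQ)
    have hgeo : ∑' n : ℕ, σ ^ n = (1 - σ)⁻¹ := ENNReal.tsum_geometric σ
    have hgeo_fin : (1 - σ)⁻¹ ≠ ⊤ := by
      rw [Ne, ENNReal.inv_eq_top, tsub_eq_zero_iff_le]
      exact fun h => absurd (lt_of_lt_of_le hσ1 h) (lt_irrefl _)
    have hterm : ∀ j k, (t j k) ^ Q ≤ ENNReal.ofReal (c ^ Q) * σ ^ (Nat.dist j k) := by
      intro j k
      calc (t j k) ^ Q ≤ (ENNReal.ofReal (c * ρ ^ (Nat.dist j k))) ^ Q :=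
            ENNReal.rpow_le_rpow (ht j k) hQ.le
        _ = ENNReal.ofReal ((c * ρ ^ (Nat.dist j k)) ^ Q) := by
            rw [← ENNReal.ofReal_rpow_of_nonneg (by positivity) hQ.le]
        _ = ENNReal.ofReal (c ^ Q * (ρ ^ Q) ^ (Nat.dist j k)) := by
            congr 1
            rw [Real.mul_rpow hc.le (by positivity), ← Real.rpow_natCast ρ (Nat.dist j k),
              ← Real.rpow_mul hρ0.le, mul_comm ((Nat.dist j k : ℝ)) Q,
              Real.rpow_mul hρ0.le, Real.rpow_natCast]
        _ = ENNReal.ofReal (c ^ Q) * σ ^ (Nat.dist j k) := by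
            rw [ENNReal.ofReal_mul (by positivity), hσdef,
              ← ENNReal.ofReal_pow (by positivity)]
    set Cq : ℝ≥0∞ := ENNReal.ofReal (c ^ Q) with hCq
    have hsum : ∀ j : ℕ, ∑' k : ℕ, (t j k) ^ Q ≤ 2 * Cq * (1 - σ)⁻¹ := by
      intro j
      have hsplit : ∀ f : ℕ → ℝ≥0∞, ∑' k : ℕ, f k
          = ∑ k ∈ range j, f k + ∑' n : ℕ, f (n + j) := by
        intro f
        exact (Summable.sum_add_tsum_nat_add' (f := f) (k := j) ENNReal.summable).symm
      rw [hsplit (fun k => (t j k) ^ Q)]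
      have h1 : ∑ k ∈ range j, (t j k) ^ Q ≤ Cq * (1 - σ)⁻¹ := by
        calc ∑ k ∈ range j, (t j k) ^ Q ≤ ∑ k ∈ range j, Cq * σ ^ (j - k) := by
              apply Finset.sum_le_sum
              intro k hk
              rw [mem_range] at hk
              have := hterm j k
              rwa [Nat.dist_eq_sub_of_le_right hk.le] at this
          _ = Cq * ∑ k ∈ range j, σ ^ (j - k) := by rw [Finset.mul_sum]
          _ ≤ Cq * (1 - σ)⁻¹ := by
              apply mul_le_mul_right
              rw [← hgeo]
              calc ∑ k ∈ range j, σ ^ (j - k) = ∑ k ∈ range j, σ ^ (j - (j - 1 - k)) := by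
                    exact (Finset.sum_range_reflect (fun k => σ ^ (j - k)) j).symm
                _ ≤ ∑ k ∈ range j, σ ^ k := by
                    apply Finset.sum_le_sum
                    intro k hk
                    rw [mem_range] at hk
                    have : j - (j - 1 - k) = k + 1 := by omega
                    rw [this, pow_succ]
                    calc σ ^ k * σ ≤ σ ^ k * 1 := mul_le_mul_right hσ1.le _
                      _ = σ ^ k := mul_one _
                _ ≤ ∑' k : ℕ, σ ^ k := ENNReal.sum_le_tsum _
      have h2 : ∑' n : ℕ, (t j (n + j)) ^ Q ≤ Cq * (1 - σ)⁻¹ := by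
        calc ∑' n : ℕ, (t j (n + j)) ^ Q ≤ ∑' n : ℕ, Cq * σ ^ n := by
              apply ENNReal.tsum_le_tsum
              intro n
              have := hterm j (n + j)
              rwa [Nat.dist_eq_sub_of_le (Nat.le_add_left j n),
                Nat.add_sub_cancel] at this
          _ = Cq * ∑' n : ℕ, σ ^ n := ENNReal.tsum_mul_left
          _ = Cq * (1 - σ)⁻¹ := by rw [hgeo]
      calc ∑ k ∈ range j, (t j k) ^ Q + ∑' n : ℕ, (t j (n + j)) ^ Q
          ≤ Cq * (1 - σ)⁻¹ + Cq * (1 - σ)⁻¹ := add_le_add h1 h2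
        _ = 2 * Cq * (1 - σ)⁻¹ := by ring
    refine ⟨(2 * Cq * (1 - σ)⁻¹) ^ (1/Q), ?_, fun j => ?_⟩
    · apply ENNReal.rpow_ne_top_of_nonneg (by positivity)
      exact ENNReal.mul_ne_top (ENNReal.mul_ne_top (by norm_num) ENNReal.ofReal_ne_top) hgeo_fin
    · rw [if_neg hqt]
      exact ENNReal.rpow_le_rpow (hsum j) (by positivity)

-- from i.lean
lemma hatFn_continuous : Continuous hatFn := by
  have : hatFn = fun x => max (1 - |2 * x - 1|) 0 := funext hatFn_eq_max
  rw [this]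
  exact (continuous_const.sub ((continuous_const.mul continuous_id').sub
    continuous_const).abs).max continuous_const

lemma hatj_continuous (j : ℕ) : Continuous (hatj j) :=
  hatFn_continuous.comp (continuous_const.mul continuous_id')

lemma hatj_sep {j l : ℕ} (hjl : j < l) :
    hatj j (((2:ℝ)^(j+1))⁻¹) - hatj l (((2:ℝ)^(j+1))⁻¹) = 1 := by
  have h1 : hatj j (((2:ℝ)^(j+1))⁻¹) = 1 := by
    unfold hatj
    have harg : (2:ℝ)^j * ((2:ℝ)^(j+1))⁻¹ = 1/2 := by
      rw [pow_succ]
      have h2 : ((2:ℝ)^j) ≠ 0 := by positivity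
      field_simp
    rw [harg]
    unfold hatFn
    rw [if_pos (by norm_num)]
    norm_num
  have h2 : hatj l (((2:ℝ)^(j+1))⁻¹) = 0 := by
    unfold hatj
    apply hatFn_eq_zero_of_ge_one
    have hle : (2:ℝ)^(j+1) ≤ 2^l := pow_le_pow_right₀ (by norm_num) hjl
    have hpos : (0:ℝ) < 2^(j+1) := by positivity
    calc (1:ℝ) = 2^(j+1) * ((2:ℝ)^(j+1))⁻¹ := by field_simp
      _ ≤ 2^l * ((2:ℝ)^(j+1))⁻¹ := by
          apply mul_le_mul_of_nonneg_right hle (by positivity)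
  rw [h1, h2]; ring

end Aux

/-- non-compactness of the limiting embedding `B^{1/p}_{p,q} → L_∞`:
the hat functions have uniformly bounded Besov quasinorm but are uniformly separated
in the sup-norm. -/
theorem statement17 (p : ℝ) (hp : 0 < p) (q : ℝ≥0∞) (hq : 0 < q) (m : ℕ)
    (hm : 1 / p < (m:ℝ)) :
    ∃ C : ℝ, 0 < C ∧
      (∀ j : ℕ, NBesov p q m (hatj j) ≤ ENNReal.ofReal C) ∧
      (∀ j l : ℕ, j ≠ l → ∃ x : ℝ, 1 ≤ |hatj j x - hatj l x|) ∧
      ¬ TotallyBounded {g : BoundedContinuousFunction ℝ ℝ |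
          (∀ x : ℝ, x ∉ Set.Icc (0:ℝ) 1 → g x = 0) ∧
          NBesov p q m (⇑g) ≤ ENNReal.ofReal C} := by
  obtain ⟨c, ρ, hc, hρ0, hρ1, ht⟩ := tk_bound hp hm
  obtain ⟨E, hEtop, hE⟩ := qsum_bound q hq c ρ hc hρ0 hρ1
    (fun j k => ENNReal.ofReal ((2:ℝ)^((k:ℝ)/p)) * modk p m k (hatj j)) ht
  set B : ℝ≥0∞ := 1 + E with hBdef
  have hBtop : B ≠ ⊤ := by
    rw [hBdef]
    exact ENNReal.add_ne_top.mpr ⟨by norm_num, hEtop⟩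
  set C : ℝ := B.toReal + 1 with hCdef
  have hC0 : 0 < C := by
    rw [hCdef]
    positivity
  have hBC : B ≤ ENNReal.ofReal C := by
    conv_lhs => rw [← ENNReal.ofReal_toReal hBtop]
    exact ENNReal.ofReal_le_ofReal (by rw [hCdef]; linarith)
  have hNB : ∀ j : ℕ, NBesov p q m (hatj j) ≤ ENNReal.ofReal C := by
    intro j
    refine le_trans ?_ hBC
    rw [hBdef]
    unfold NBesov
    exact add_le_add (eLpNorm_hatj_le hp j) (hE j)
  have hsep : ∀ j l : ℕ, j ≠ l → ∃ x : ℝ, 1 ≤ |hatj j x - hatj l x| := by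
    intro j l hjl
    rcases Nat.lt_or_ge j l with h | h
    · exact ⟨((2:ℝ)^(j+1))⁻¹, by rw [hatj_sep h]; norm_num⟩
    · have h' : l < j := lt_of_le_of_ne h (Ne.symm hjl)
      refine ⟨((2:ℝ)^(l+1))⁻¹, ?_⟩
      rw [abs_sub_comm, hatj_sep h']
      norm_num
  refine ⟨C, hC0, hNB, hsep, ?_⟩
  -- define the family in the set
  set F : ℕ → BoundedContinuousFunction ℝ ℝ := fun j =>
    BoundedContinuousFunction.ofNormedAddCommGroup (hatj j) (hatj_continuous j) 1
      (fun x => by rw [Real.norm_eq_abs]; exact abs_hatj_le_one j x) with hFdef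
  have hFcoe : ∀ j, ⇑(F j) = hatj j := fun j => rfl
  have hFmem : ∀ j, F j ∈ {g : BoundedContinuousFunction ℝ ℝ |
      (∀ x : ℝ, x ∉ Set.Icc (0:ℝ) 1 → g x = 0) ∧
      NBesov p q m (⇑g) ≤ ENNReal.ofReal C} := by
    intro j
    constructor
    · intro x hx
      rw [Set.mem_Icc] at hx
      push_neg at hx
      rw [hFcoe]
      rcases lt_or_ge x 0 with h | h
      · exact hatj_eq_zero_of_nonpos h.le
      · apply hatj_eq_zero_of_ge
        have h1 : (1:ℝ) ≤ 2^j := one_le_pow₀ (by norm_num)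
        have h2 := hx h
        have := inv_le_one_of_one_le₀ h1
        linarith
    · rw [hFcoe]; exact hNB j
  have hFdist : ∀ j l : ℕ, j ≠ l → 1 ≤ dist (F j) (F l) := by
    intro j l hjl
    obtain ⟨x, hx⟩ := hsep j l hjl
    calc (1:ℝ) ≤ |hatj j x - hatj l x| := hx
      _ = dist (F j x) (F l x) := by rw [Real.dist_eq, hFcoe, hFcoe]
      _ ≤ dist (F j) (F l) := BoundedContinuousFunction.dist_coe_le_dist x
  intro hTB
  rw [Metric.totallyBounded_iff] at hTB
  obtain ⟨t, htfin, htcover⟩ := hTB (1/2) (by norm_num)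
  have hchoice : ∀ j : ℕ, ∃ y ∈ t, F j ∈ Metric.ball y (1/2) := by
    intro j
    have := htcover (hFmem j)
    simpa using this
  choose φ hφt hφball using hchoice
  haveI : Finite ↥t := htfin.to_subtype
  have : ∃ j l : ℕ, j ≠ l ∧ (⟨φ j, hφt j⟩ : ↥t) = ⟨φ l, hφt l⟩ := by
    obtain ⟨j, l, hne, heq⟩ := Finite.exists_ne_map_eq_of_infinite
      (fun j : ℕ => (⟨φ j, hφt j⟩ : ↥t))
    exact ⟨j, l, hne, heq⟩
  obtain ⟨j, l, hne, heq⟩ := this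
  have hφeq : φ j = φ l := congrArg Subtype.val heq
  have h1 : dist (F j) (F l) < 1 := by
    have hb1 := hφball j
    have hb2 := hφball l
    rw [Metric.mem_ball] at hb1 hb2
    calc dist (F j) (F l) ≤ dist (F j) (φ j) + dist (φ j) (F l) := dist_triangle _ _ _
      _ = dist (F j) (φ j) + dist (F l) (φ l) := by
          rw [hφeq, dist_comm (φ l) (F l)]
      _ < 1/2 + 1/2 := add_lt_add hb1 hb2
      _ = 1 := by norm_num
  exact absurd (hFdist j l hne) (not_le.mpr h1)
end
end
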